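/- arXiv:2107.11357 — 14 statements merged into one kernel-verified Lean document; each statement's English description precedes it below -/
import Mathlib

section
/- Suppose an index φ satisfies linearity and the joint null axiom (if v(S ∪ T) = v(S) for all S ⊆ N∖T then φ_T(v) = 0), and φ_T(v) = Σ_{S⊆N} a_S^T v(S) for constants a_S^T. Then for every nonempty T ⊆ N and every nonempty S ⊆ N∖T, a_S^T = −a_{S∪T}^T. -/
open Finset

/-- Lemma (first part): if `φ` is linear, satisfies the joint null axiom, and
`φ v T = ∑ S, a T S * v S`, then for every nonempty `T` and nonempty `S ⊆ N \ T`,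
`a T S = - a T (S ∪ T)`. -/
theorem stmt1 (n : ℕ)
    (φ : (Finset (Fin n) → ℝ) → Finset (Fin n) → ℝ)
    (a : Finset (Fin n) → Finset (Fin n) → ℝ)
    (hadd : ∀ v w : Finset (Fin n) → ℝ, v ∅ = 0 → w ∅ = 0 →
      ∀ T : Finset (Fin n), φ (v + w) T = φ v T + φ w T)
    (hsmul : ∀ (c : ℝ) (v : Finset (Fin n) → ℝ), v ∅ = 0 →
      ∀ T : Finset (Fin n), φ (c • v) T = c * φ v T)
    (hnull : ∀ v : Finset (Fin n) → ℝ, v ∅ = 0 → ∀ T : Finset (Fin n),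
      (∀ S ⊆ Tᶜ, v (S ∪ T) = v S) → φ v T = 0)
    (hrep : ∀ v : Finset (Fin n) → ℝ, v ∅ = 0 → ∀ T : Finset (Fin n), T.Nonempty →
      φ v T = ∑ S : Finset (Fin n), a T S * v S) :
    ∀ T : Finset (Fin n), T.Nonempty → ∀ S ⊆ Tᶜ, S.Nonempty →
      a T S = - a T (S ∪ T) := by
  intro T hT S hS hSne
  obtain ⟨t, ht⟩ := hT
  have htS : t ∉ S := fun h => (mem_compl.mp (hS h)) ht
  have hne : S ≠ S ∪ T := fun h => htS (h ▸ mem_union_right S ht)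
  set v : Finset (Fin n) → ℝ :=
    fun X => (if X = S then (1:ℝ) else 0) + (if X = S ∪ T then 1 else 0) with hv
  have hSe : S ≠ ∅ := hSne.ne_empty
  have hSTe : S ∪ T ≠ ∅ := fun h => hSe (subset_empty.mp (h ▸ subset_union_left))
  have hv0 : v ∅ = 0 := by
    simp [hv, Ne.symm hSe, Ne.symm hSTe]
  have hnullv : ∀ X ⊆ Tᶜ, v (X ∪ T) = v X := by
    intro X hX
    have h1 : X ∪ T ≠ S := fun h => htS (h ▸ mem_union_right X ht)
    have h2 : X ∪ T = S ∪ T ↔ X = S := by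
      constructor
      · intro h
        have hXd : Disjoint X T := disjoint_compl_left.mono_left hX
        have hSd : Disjoint S T := disjoint_compl_left.mono_left hS
        have := congrArg (fun Y => Y \ T) h
        simpa [union_sdiff_cancel_right hXd, union_sdiff_cancel_right hSd] using this
      · intro h; rw [h]
    have h3 : X ≠ S ∪ T := by
      intro h
      have : T ⊆ Tᶜ := subset_union_right.trans (h ▸ hX)
      exact (mem_compl.mp (this ht)) ht
    simp [hv, h1, h2, h3]
  have h0 := hnull v hv0 T hnullv
  rw [hrep v hv0 T ⟨t, ht⟩] at h0
  have hsum : ∑ X : Finset (Fin n), a T X * v X = a T S + a T (S ∪ T) := by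
    simp only [hv, mul_add, Finset.sum_add_distrib, mul_ite, mul_one, mul_zero]
    rw [Finset.sum_ite_eq' univ S (a T), Finset.sum_ite_eq' univ (S ∪ T) (a T)]
    simp
  rw [hsum] at h0
  linarith
end

section
/- Suppose an index φ satisfies linearity and the joint null axiom, and φ_T(v) = Σ_{S⊆N} a_S^T v(S) for constants a_S^T. Then for every nonempty T ⊆ N, every S ⊆ N∖T, and every nonempty proper subset H ⊊ T, the constant a_{S∪H}^T = 0. -/
open Finset

/-- Lemma (second part): if `φ` is linear, satisfies the joint null axiom, and
`φ v T = ∑ S, a T S * v S`, then for every nonempty `T`, every `S ⊆ N \ T`, and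
every nonempty proper subset `H ⊊ T`, the constant `a T (S ∪ H) = 0`. -/
theorem stmt2 (n : ℕ)
    (φ : (Finset (Fin n) → ℝ) → Finset (Fin n) → ℝ)
    (a : Finset (Fin n) → Finset (Fin n) → ℝ)
    (hadd : ∀ v w : Finset (Fin n) → ℝ, v ∅ = 0 → w ∅ = 0 →
      ∀ T : Finset (Fin n), φ (v + w) T = φ v T + φ w T)
    (hsmul : ∀ (c : ℝ) (v : Finset (Fin n) → ℝ), v ∅ = 0 →
      ∀ T : Finset (Fin n), φ (c • v) T = c * φ v T)
    (hnull : ∀ v : Finset (Fin n) → ℝ, v ∅ = 0 → ∀ T : Finset (Fin n),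
      (∀ S ⊆ Tᶜ, v (S ∪ T) = v S) → φ v T = 0)
    (hrep : ∀ v : Finset (Fin n) → ℝ, v ∅ = 0 → ∀ T : Finset (Fin n), T.Nonempty →
      φ v T = ∑ S : Finset (Fin n), a T S * v S) :
    ∀ T : Finset (Fin n), T.Nonempty → ∀ S ⊆ Tᶜ, ∀ H : Finset (Fin n),
      H.Nonempty → H ⊂ T → a T (S ∪ H) = 0 := by
  intro T hT S hS H hH hHT
  set v : Finset (Fin n) → ℝ := fun X => if X = S ∪ H then 1 else 0 with hv
  have hST : S ∩ T = ∅ := by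
    rw [← Finset.disjoint_iff_inter_eq_empty]
    exact Finset.disjoint_left.mpr fun x hx => by
      have := hS hx; simp [Finset.mem_compl] at this; exact this
  have hkey : (S ∪ H) ∩ T = H := by
    rw [Finset.union_inter_distrib_right, hST, Finset.empty_union,
      Finset.inter_eq_left]
    exact hHT.subset
  have hv0 : v ∅ = 0 := by
    have : (∅ : Finset (Fin n)) ≠ S ∪ H := by
      intro h
      obtain ⟨x, hx⟩ := hH
      have : x ∈ (∅ : Finset (Fin n)) := h ▸ Finset.mem_union_right _ hx
      simp at this
    simp [hv, this]
  have hnullv : φ v T = 0 := by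
    apply hnull v hv0 T
    intro S' hS'
    have h1 : S' ∪ T ≠ S ∪ H := by
      intro h
      have h2 : (S' ∪ T) ∩ T = T := by
        rw [Finset.union_inter_distrib_right, Finset.inter_self]
        exact Finset.union_eq_right.mpr (Finset.inter_subset_right)
      rw [h, hkey] at h2
      exact hHT.ne h2
    have h2 : S' ≠ S ∪ H := by
      intro h
      obtain ⟨x, hx⟩ := hH
      have hx1 : x ∈ S' := h ▸ Finset.mem_union_right _ hx
      have := hS' hx1
      simp [Finset.mem_compl] at this
      exact this (hHT.subset hx)
    simp [hv, h1, h2]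
  have := hrep v hv0 T hT
  rw [hnullv] at this
  simp only [hv, mul_ite, mul_one, mul_zero, Finset.sum_ite_eq'] at this
  simpa using this.symm
end

section
/- If an index φ satisfies linearity and the joint null axiom, then there exist real constants p^T(S), for each nonempty T ⊆ N and S ⊆ N∖T, such that φ_T(v) = Σ_{S ⊆ N∖T} p^T(S) · [v(S∪T) − v(S)] for every game v and every nonempty T ⊆ N. -/
open Finset

lemma phi_sum_aux (n : ℕ)
    (φ : (Finset (Fin n) → ℝ) → Finset (Fin n) → ℝ)
    (hadd : ∀ v w : Finset (Fin n) → ℝ, v ∅ = 0 → w ∅ = 0 →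
      ∀ T : Finset (Fin n), φ (v + w) T = φ v T + φ w T)
    (hsmul : ∀ (c : ℝ) (v : Finset (Fin n) → ℝ), v ∅ = 0 →
      ∀ T : Finset (Fin n), φ (c • v) T = c * φ v T)
    {ι : Type} [DecidableEq ι] (F : Finset ι) (c : ι → ℝ)
    (f : ι → Finset (Fin n) → ℝ) (hf : ∀ i, f i ∅ = 0)
    (T : Finset (Fin n)) (h0 : φ 0 T = 0) :
    φ (∑ i ∈ F, c i • f i) T = ∑ i ∈ F, c i * φ (f i) T := by
  induction F using Finset.induction with
  | empty => simpa using h0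
  | insert a s hnot ih =>
      rw [Finset.sum_insert hnot, Finset.sum_insert hnot, ← ih]
      rw [hadd]
      · rw [hsmul _ _ (hf a)]
      · simp [hf a]
      · simp [Finset.sum_apply, hf]

/-- Proposition: if `φ` is linear and satisfies the joint null axiom, then there
exist constants `p T S` (for nonempty `T` and `S ⊆ N \ T`) with
`φ v T = ∑_{S ⊆ N \ T} p T S * (v (S ∪ T) - v S)` for every game `v`. -/
theorem stmt3 (n : ℕ)
    (φ : (Finset (Fin n) → ℝ) → Finset (Fin n) → ℝ)
    (hadd : ∀ v w : Finset (Fin n) → ℝ, v ∅ = 0 → w ∅ = 0 →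
      ∀ T : Finset (Fin n), φ (v + w) T = φ v T + φ w T)
    (hsmul : ∀ (c : ℝ) (v : Finset (Fin n) → ℝ), v ∅ = 0 →
      ∀ T : Finset (Fin n), φ (c • v) T = c * φ v T)
    (hnull : ∀ v : Finset (Fin n) → ℝ, v ∅ = 0 → ∀ T : Finset (Fin n),
      (∀ S ⊆ Tᶜ, v (S ∪ T) = v S) → φ v T = 0) :
    ∃ p : Finset (Fin n) → Finset (Fin n) → ℝ,
      ∀ v : Finset (Fin n) → ℝ, v ∅ = 0 → ∀ T : Finset (Fin n), T.Nonempty →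
        φ v T = ∑ S ∈ Tᶜ.powerset, p T S * (v (S ∪ T) - v S) := by
  classical
  -- elementary games
  set g : Finset (Fin n) → Finset (Fin n) → Finset (Fin n) → ℝ :=
    fun T S A => if A = S ∪ T then (1:ℝ) else 0 with hg
  refine ⟨fun T S => φ (g T S) T, ?_⟩
  intro v hv0 T hT
  have h0 : φ 0 T = 0 := by
    have := hsmul 0 0 rfl T
    simpa using this
  have hgz : ∀ S : Finset (Fin n), S ⊆ Tᶜ → g T S ∅ = 0 := by
    intro S hS
    simp only [hg]
    rw [if_neg]
    intro h
    obtain ⟨t, ht⟩ := hT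
    have : t ∈ (∅ : Finset (Fin n)) := by rw [h]; exact Finset.mem_union_right _ ht
    simp at this
  -- the "main part"
  set c : Finset (Fin n) → ℝ := fun S => v (S ∪ T) - v S with hc
  set u : Finset (Fin n) → ℝ := ∑ S ∈ Tᶜ.powerset, c S • g T S with hu
  -- values of u
  have hu_val : ∀ A, u A = ∑ S ∈ Tᶜ.powerset, c S * (if A = S ∪ T then (1:ℝ) else 0) := by
    intro A
    simp [hu, Finset.sum_apply, hg]
  have huQ : ∀ Q ⊆ Tᶜ, u Q = 0 := by
    intro Q hQ
    rw [hu_val]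
    apply Finset.sum_eq_zero
    intro S hS
    rw [if_neg, mul_zero]
    intro h
    obtain ⟨t, ht⟩ := hT
    have htQ : t ∈ Q := by rw [h]; exact Finset.mem_union_right _ ht
    exact (Finset.mem_compl.mp (hQ htQ)) ht
  have huQT : ∀ Q ⊆ Tᶜ, u (Q ∪ T) = c Q := by
    intro Q hQ
    rw [hu_val]
    rw [Finset.sum_eq_single Q]
    · simp
    · intro S hS hSQ
      rw [if_neg, mul_zero]
      intro h
      apply hSQ
      -- Q ∪ T = S ∪ T with Q, S ⊆ Tᶜ gives S = Q
      have hS' := Finset.mem_powerset.mp hS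
      apply Finset.ext
      intro x
      constructor
      · intro hx
        have : x ∈ Q ∪ T := by rw [h]; exact Finset.mem_union_left _ hx
        rcases Finset.mem_union.mp this with h1 | h1
        · exact h1
        · exact absurd h1 (Finset.mem_compl.mp (hS' hx))
      · intro hx
        have : x ∈ S ∪ T := by rw [← h]; exact Finset.mem_union_left _ hx
        rcases Finset.mem_union.mp this with h1 | h1
        · exact h1
        · exact absurd h1 (Finset.mem_compl.mp (hQ hx))
    · intro h
      exact absurd (Finset.mem_powerset.mpr hQ) h
  have hu0 : u ∅ = 0 := huQ ∅ (Finset.empty_subset _)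
  -- residual
  set r : Finset (Fin n) → ℝ := v - u with hr
  have hr0 : r ∅ = 0 := by simp [hr, hv0, hu0]
  have hrnull : φ r T = 0 := by
    apply hnull r hr0 T
    intro S hS
    simp only [hr, Pi.sub_apply]
    rw [huQ S hS, huQT S hS, hc]
    ring
  have hvur : v = u + r := by
    funext A; simp [hr]
  have key : φ v T = φ u T := by
    rw [hvur, hadd u r hu0 hr0, hrnull, add_zero]
  rw [key, hu]
  rw [phi_sum_aux n φ hadd hsmul _ c (g T) ?_ T h0]
  · apply Finset.sum_congr rfl
    intro S hS
    rw [mul_comm]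
  · intro S
    -- need g T S ∅ = 0 for ALL S; but only have for S ⊆ Tᶜ... fix: true for all S since T nonempty
    simp only [hg]
    rw [if_neg]
    intro h
    obtain ⟨t, ht⟩ := hT
    have : t ∈ (∅ : Finset (Fin n)) := by rw [h]; exact Finset.mem_union_right _ ht
    simp at this
end

section
/- Let 1 ≤ k ≤ n and suppose φ_T(v) = Σ_{S ⊆ N∖T} p^T(S)[v(S∪T) − v(S)] for constants p^T(S). Then φ satisfies joint efficiency of order k (i.e., Σ over nonempty T ⊆ N with |T| ≤ k of φ_T(v) equals v(N) for all games v) if and only if for every nonempty S ⊆ N, δ_N(S) = Σ_{∅≠T⊆S, |T|≤k} p^T(S∖T) − Σ_{∅≠T⊆N∖S, |T|≤k} p^T(S), where δ_N(S) = 1 if S = N and 0 otherwise. -/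
open Finset

/-- Proposition: with `φ v T = ∑_{S ⊆ N \ T} p T S * (v (S ∪ T) - v S)`,
joint efficiency of order `k` holds iff the constants `p` satisfy the
`δ_N` equation for every nonempty `S ⊆ N`. -/
theorem stmt4 (n k : ℕ) (hk1 : 1 ≤ k) (hkn : k ≤ n)
    (p : Finset (Fin n) → Finset (Fin n) → ℝ)
    (φ : (Finset (Fin n) → ℝ) → Finset (Fin n) → ℝ)
    (hrep : ∀ v : Finset (Fin n) → ℝ, v ∅ = 0 → ∀ T : Finset (Fin n), T.Nonempty →
      φ v T = ∑ S ∈ Tᶜ.powerset, p T S * (v (S ∪ T) - v S)) :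
    (∀ v : Finset (Fin n) → ℝ, v ∅ = 0 →
        ∑ T ∈ univ.filter (fun T : Finset (Fin n) => T.Nonempty ∧ T.card ≤ k),
          φ v T = v univ)
    ↔ (∀ S : Finset (Fin n), S.Nonempty →
        (if S = univ then (1 : ℝ) else 0) =
          (∑ T ∈ S.powerset.filter (fun T => T.Nonempty ∧ T.card ≤ k), p T (S \ T))
          - ∑ T ∈ Sᶜ.powerset.filter (fun T => T.Nonempty ∧ T.card ≤ k), p T S) := by
  have hn : 1 ≤ n := le_trans hk1 hkn
  haveI : Nonempty (Fin n) := ⟨⟨0, by omega⟩⟩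
  set F := univ.filter (fun T : Finset (Fin n) => T.Nonempty ∧ T.card ≤ k) with hF
  set c : Finset (Fin n) → ℝ := fun A =>
      (∑ T ∈ A.powerset.filter (fun T => T.Nonempty ∧ T.card ≤ k), p T (A \ T))
        - ∑ T ∈ Aᶜ.powerset.filter (fun T => T.Nonempty ∧ T.card ≤ k), p T A with hc
  have key : ∀ v : Finset (Fin n) → ℝ, v ∅ = 0 →
      ∑ T ∈ F, φ v T = ∑ A ∈ (univ : Finset (Fin n)).powerset, c A * v A := by
    intro v hv
    have h1 : ∑ T ∈ F, φ v T
        = ∑ T ∈ F, ∑ S ∈ Tᶜ.powerset, p T S * (v (S ∪ T) - v S) := by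
      refine sum_congr rfl fun T hT => ?_
      rw [hF, mem_filter] at hT
      exact hrep v hv T hT.2.1
    have hB : ∀ T : Finset (Fin n),
        ∑ S ∈ Tᶜ.powerset, p T S * v (S ∪ T)
        = ∑ A ∈ (univ : Finset (Fin n)).powerset,
            (if T ⊆ A then p T (A \ T) * v A else 0) := by
      intro T
      rw [← sum_filter]
      refine sum_bij' (fun S _ => S ∪ T) (fun A _ => A \ T) ?_ ?_ ?_ ?_ ?_
      · intro S hS
        simp only [mem_powerset] at hS
        simp [mem_filter]
      · intro A hA
        simp only [mem_filter, mem_powerset] at hA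
        simp only [mem_powerset]
        intro x hx
        simp only [mem_sdiff] at hx
        simp [mem_compl, hx.2]
      · intro S hS
        simp only [mem_powerset] at hS
        have hdisj : Disjoint S T := by
          rw [Finset.disjoint_left]
          intro x hx
          have := hS hx
          simpa [mem_compl] using this
        show (S ∪ T) \ T = S
        rw [Finset.union_sdiff_right, Finset.sdiff_eq_self_of_disjoint hdisj]
      · intro A hA
        simp only [mem_filter, mem_powerset] at hA
        exact Finset.sdiff_union_of_subset hA.2
      · intro S hS
        simp only [mem_powerset] at hS
        have hdisj : Disjoint S T := by
          rw [Finset.disjoint_left]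
          intro x hx
          have := hS hx
          simpa [mem_compl] using this
        have e : (S ∪ T) \ T = S := by
          rw [Finset.union_sdiff_right, Finset.sdiff_eq_self_of_disjoint hdisj]
        rw [e]
    have hC : ∀ T : Finset (Fin n),
        ∑ S ∈ Tᶜ.powerset, p T S * v S
        = ∑ A ∈ (univ : Finset (Fin n)).powerset,
            (if T ⊆ Aᶜ then p T A * v A else 0) := by
      intro T
      rw [← sum_filter]
      refine sum_congr ?_ fun _ _ => rfl
      ext A
      simp [Finset.subset_compl_comm]
    calc ∑ T ∈ F, φ v T
        = ∑ T ∈ F, ((∑ A ∈ (univ : Finset (Fin n)).powerset,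
              (if T ⊆ A then p T (A \ T) * v A else 0))
            - ∑ A ∈ (univ : Finset (Fin n)).powerset,
              (if T ⊆ Aᶜ then p T A * v A else 0)) := by
          rw [h1]
          refine sum_congr rfl fun T _ => ?_
          rw [← hB, ← hC, ← sum_sub_distrib]
          refine sum_congr rfl fun S _ => ?_
          ring
      _ = ∑ A ∈ (univ : Finset (Fin n)).powerset, c A * v A := by
          rw [sum_sub_distrib, Finset.sum_comm, Finset.sum_comm (s := F), ← sum_sub_distrib]
          refine sum_congr rfl fun A _ => ?_
          rw [← sum_filter, ← sum_filter]
          have e1 : F.filter (fun T => T ⊆ A)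
              = A.powerset.filter (fun T => T.Nonempty ∧ T.card ≤ k) := by
            ext T; simp [hF, mem_filter, mem_powerset]; tauto
          have e2 : F.filter (fun T => T ⊆ Aᶜ)
              = Aᶜ.powerset.filter (fun T => T.Nonempty ∧ T.card ≤ k) := by
            ext T; simp [hF, mem_filter, mem_powerset]; tauto
          rw [e1, e2, hc, sub_mul, sum_mul, sum_mul]
  constructor
  · intro h S hS
    set v : Finset (Fin n) → ℝ := fun B => if B = S then (1 : ℝ) else 0 with hvdef
    have hv0 : v ∅ = 0 := by
      simp [hvdef, (Ne.symm hS.ne_empty)]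
    have h1 := h v hv0
    have h2 := key v hv0
    have h3 : ∑ A ∈ (univ : Finset (Fin n)).powerset, c A * v A = c S := by
      simp only [hvdef, mul_ite, mul_one, mul_zero]
      rw [Finset.sum_ite_eq' _ S c]
      simp [mem_powerset]
    rw [h2, h3] at h1
    rw [hvdef] at h1
    simp only [eq_comm (a := (univ : Finset (Fin n))) (b := S)] at h1
    rw [← h1]
  · intro h v hv
    rw [key v hv]
    have huniv : (univ : Finset (Fin n)).Nonempty := univ_nonempty
    rw [Finset.sum_eq_single (univ : Finset (Fin n))]
    · have := h univ huniv
      simp only [hc]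
      rw [← this]
      norm_num
    · intro A _ hA
      rcases A.eq_empty_or_nonempty with rfl | hAne
      · rw [hv, mul_zero]
      · have := h A hAne
        rw [if_neg hA] at this
        simp only [hc]
        rw [← this, zero_mul]
    · intro hmem
      exact absurd (mem_powerset.mpr (Finset.Subset.refl _)) hmem
end

section
/- Fix 1 ≤ k ≤ n. Consider the recursive system q_0 = 1/(Σ_{i=1}^{k} C(n,i)) and, for r = 1,…,n−1, q_r = (Σ_{s = max(r−k,0)}^{r−1} C(r,s)·q_s) / (Σ_{s=1}^{min(k, n−r)} C(n−r, s)), together with the constraint Σ_{s=n−k}^{n−1} C(n,s)·q_s = 1. This system has a unique solution (q_0,…,q_{n−1}) in ℝ^n. -/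
open Finset

noncomputable def Qf (n k : ℕ) : ℕ → ℝ
  | r =>
    if r = 0 then 1 / ∑ i ∈ Finset.Icc 1 k, (n.choose i : ℝ)
    else if r ≤ n - 1 then
      (∑ s ∈ (Finset.Ico (r - k) r).attach, (r.choose s.1 : ℝ) * Qf n k s.1) /
        (∑ s ∈ Finset.Icc 1 (min k (n - r)), ((n - r).choose s : ℝ))
    else 0
  decreasing_by exact (Finset.mem_Ico.mp s.2).2

theorem Qf_zero (n k : ℕ) : Qf n k 0 = 1 / ∑ i ∈ Finset.Icc 1 k, (n.choose i : ℝ) := by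
  rw [Qf]; simp

theorem Qf_mid (n k r : ℕ) (h1 : 1 ≤ r) (h2 : r ≤ n - 1) :
    Qf n k r = (∑ s ∈ Finset.Ico (r - k) r, (r.choose s : ℝ) * Qf n k s) /
        (∑ s ∈ Finset.Icc 1 (min k (n - r)), ((n - r).choose s : ℝ)) := by
  rw [Qf]
  rw [if_neg (by omega), if_pos h2, Finset.sum_attach _ (fun s => (r.choose s : ℝ) * Qf n k s)]

theorem Qf_top (n k r : ℕ) (hn : 1 ≤ n) (h : n ≤ r) : Qf n k r = 0 := by
  rw [Qf]
  rw [if_neg (by omega), if_neg (by omega)]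

/-- The recursive system defining `(q_0, …, q_{n-1})`, together with the
normalisation constraint, has a unique solution in `ℝ^n` (encoded as functions
`ℕ → ℝ` vanishing from index `n` on). -/
theorem stmt5 (n k : ℕ) (hn : 1 ≤ n) (hk1 : 1 ≤ k) (hkn : k ≤ n) :
    ∃! q : ℕ → ℝ,
      (∀ r, n ≤ r → q r = 0) ∧
      q 0 = 1 / ∑ i ∈ Finset.Icc 1 k, (n.choose i : ℝ) ∧
      (∀ r, 1 ≤ r → r ≤ n - 1 →
        q r = (∑ s ∈ Finset.Ico (r - k) r, (r.choose s : ℝ) * q s) /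
              (∑ s ∈ Finset.Icc 1 (min k (n - r)), ((n - r).choose s : ℝ))) ∧
      ∑ s ∈ Finset.Ico (n - k) n, (n.choose s : ℝ) * q s = 1 := by
  have hDpos : 0 < ∑ i ∈ Finset.Icc 1 k, (n.choose i : ℝ) := by
    have h1 : (1:ℕ) ∈ Finset.Icc 1 k := by simp [hk1]
    have hle : (n.choose 1 : ℝ) ≤ ∑ i ∈ Finset.Icc 1 k, (n.choose i : ℝ) :=
      Finset.single_le_sum (f := fun i => (n.choose i : ℝ)) (fun i _ => by positivity) h1
    have hpos : (0:ℝ) < (n.choose 1 : ℝ) := by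
      rw [Nat.choose_one_right]; exact_mod_cast hn
    linarith
  have hden : ∀ r, 1 ≤ r → r ≤ n - 1 →
      0 < ∑ s ∈ Finset.Icc 1 (min k (n - r)), ((n - r).choose s : ℝ) := by
    intro r h1 h2
    have h1m : (1:ℕ) ∈ Finset.Icc 1 (min k (n - r)) := by simp; omega
    have hle : ((n - r).choose 1 : ℝ) ≤ _ :=
      Finset.single_le_sum (f := fun s => ((n - r).choose s : ℝ)) (fun i _ => by positivity) h1m
    have hpos : (0:ℝ) < ((n - r).choose 1 : ℝ) := by
      rw [Nat.choose_one_right]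
      have : 0 < n - r := by omega
      exact_mod_cast this
    linarith
  refine ⟨Qf n k, ⟨fun r hr => Qf_top n k r hn hr, Qf_zero n k, fun r h1 h2 => Qf_mid n k r h1 h2, ?_⟩, ?_⟩
  · -- the constraint
    set P : ℕ → ℝ := fun s => (n.choose s : ℝ) * Qf n k s with hP
    have key2 : ∀ r, 1 ≤ r → r ≤ n - 1 →
        P r * (∑ t ∈ Finset.Icc 1 (min k (n - r)), ((n - r).choose t : ℝ))
          = ∑ s ∈ Finset.Ico (r - k) r, ((n - s).choose (r - s) : ℝ) * P s := by
      intro r h1 h2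
      have hdpos := hden r h1 h2
      have e2 : Qf n k r * (∑ t ∈ Finset.Icc 1 (min k (n - r)), ((n - r).choose t : ℝ))
          = ∑ s ∈ Finset.Ico (r - k) r, (r.choose s : ℝ) * Qf n k s := by
        rw [Qf_mid n k r h1 h2, div_mul_cancel₀ _ (ne_of_gt hdpos)]
      calc P r * (∑ t ∈ Finset.Icc 1 (min k (n - r)), ((n - r).choose t : ℝ))
          = (n.choose r : ℝ) * (Qf n k r * ∑ t ∈ Finset.Icc 1 (min k (n - r)), ((n - r).choose t : ℝ)) := by
            rw [hP]; ring
        _ = (n.choose r : ℝ) * ∑ s ∈ Finset.Ico (r - k) r, (r.choose s : ℝ) * Qf n k s := by rw [e2]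
        _ = ∑ s ∈ Finset.Ico (r - k) r, ((n.choose r : ℝ) * (r.choose s : ℝ)) * Qf n k s := by
            rw [Finset.mul_sum]; exact Finset.sum_congr rfl fun s _ => by ring
        _ = ∑ s ∈ Finset.Ico (r - k) r, ((n - s).choose (r - s) : ℝ) * P s := by
            refine Finset.sum_congr rfl fun s hs => ?_
            have hsr : s < r := (Finset.mem_Ico.mp hs).2
            have hmul : n.choose r * r.choose s = n.choose s * (n - s).choose (r - s) :=
              Nat.choose_mul (le_of_lt hsr)
            have hmulR : (n.choose r : ℝ) * (r.choose s : ℝ)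
                = (n.choose s : ℝ) * ((n - s).choose (r - s) : ℝ) := by exact_mod_cast hmul
            rw [hmulR, hP]; ring
    have key1 : P 0 * (∑ t ∈ Finset.Icc 1 (min k (n - 0)), ((n - 0).choose t : ℝ)) = 1 := by
      simp only [Nat.sub_zero, min_eq_left hkn, hP, Nat.choose_zero_right, Nat.cast_one, one_mul,
        Qf_zero]
      rw [div_mul_cancel₀ _ (ne_of_gt hDpos)]
    have dc : ∑ r ∈ Finset.range n,
          P r * (∑ t ∈ Finset.Icc 1 (min k (n - r)), ((n - r).choose t : ℝ))
        = ∑ r ∈ Finset.Icc 1 n, ∑ s ∈ Finset.Ico (r - k) r, ((n - s).choose (r - s) : ℝ) * P s := by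
      have lhs : ∀ r ∈ Finset.range n,
          P r * (∑ t ∈ Finset.Icc 1 (min k (n - r)), ((n - r).choose t : ℝ))
            = ∑ t ∈ Finset.Icc 1 (min k (n - r)), ((n - r).choose t : ℝ) * P r := by
        intro r _; rw [Finset.mul_sum]; exact Finset.sum_congr rfl fun t _ => by ring
      rw [Finset.sum_congr rfl lhs, Finset.sum_sigma', Finset.sum_sigma']
      refine Finset.sum_nbij' (i := fun x => ⟨x.1 + x.2, x.1⟩) (j := fun x => ⟨x.2, x.1 - x.2⟩)
        ?_ ?_ ?_ ?_ ?_
      · rintro ⟨r, t⟩ h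
        simp only [Finset.mem_sigma, Finset.mem_range, Finset.mem_Icc, Finset.mem_Ico] at *
        omega
      · rintro ⟨r, s⟩ h
        simp only [Finset.mem_sigma, Finset.mem_range, Finset.mem_Icc, Finset.mem_Ico] at *
        omega
      · rintro ⟨r, t⟩ h
        simp only [Sigma.ext_iff, heq_eq_eq]
        exact ⟨trivial, by omega⟩
      · rintro ⟨r, s⟩ h
        simp only [Finset.mem_sigma, Finset.mem_range, Finset.mem_Icc, Finset.mem_Ico] at h
        simp only [Sigma.ext_iff, heq_eq_eq]
        exact ⟨by omega, trivial⟩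
      · rintro ⟨r, t⟩ h
        simp only [Finset.mem_sigma, Finset.mem_range, Finset.mem_Icc, Finset.mem_Ico] at h
        have : r + t - r = t := by omega
        have : n - r = n - r := rfl
        simp only [Nat.add_sub_cancel_left]
    obtain ⟨m, rfl⟩ : ∃ m, n = m + 1 := ⟨n - 1, by omega⟩
    have hsplitL : ∑ r ∈ Finset.range (m + 1),
          P r * (∑ t ∈ Finset.Icc 1 (min k (m + 1 - r)), ((m + 1 - r).choose t : ℝ))
        = P 0 * (∑ t ∈ Finset.Icc 1 (min k (m + 1 - 0)), ((m + 1 - 0).choose t : ℝ))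
          + ∑ r ∈ Finset.Icc 1 m,
            P r * (∑ t ∈ Finset.Icc 1 (min k (m + 1 - r)), ((m + 1 - r).choose t : ℝ)) := by
      rw [Finset.range_eq_Ico, Finset.sum_eq_sum_Ico_succ_bot (Nat.succ_pos m), Nat.succ_eq_add_one, Finset.Ico_add_one_right_eq_Icc]
    have hsplitR : ∑ r ∈ Finset.Icc 1 (m + 1),
          ∑ s ∈ Finset.Ico (r - k) r, ((m + 1 - s).choose (r - s) : ℝ) * P s
        = (∑ r ∈ Finset.Icc 1 m,
            ∑ s ∈ Finset.Ico (r - k) r, ((m + 1 - s).choose (r - s) : ℝ) * P s)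
          + ∑ s ∈ Finset.Ico (m + 1 - k) (m + 1), ((m + 1 - s).choose (m + 1 - s) : ℝ) * P s := by
      rw [Finset.sum_Icc_succ_top (by omega : 1 ≤ m + 1)]
    have hmid : ∀ r ∈ Finset.Icc 1 m,
        P r * (∑ t ∈ Finset.Icc 1 (min k (m + 1 - r)), ((m + 1 - r).choose t : ℝ))
          = ∑ s ∈ Finset.Ico (r - k) r, ((m + 1 - s).choose (r - s) : ℝ) * P s := by
      intro r hr
      have := Finset.mem_Icc.mp hr
      exact key2 r this.1 (by omega)
    have hfin : ∑ s ∈ Finset.Ico (m + 1 - k) (m + 1), ((m + 1 - s).choose (m + 1 - s) : ℝ) * P s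
        = 1 := by
      have := dc
      rw [hsplitL, hsplitR, Finset.sum_congr rfl hmid] at this
      linarith [key1, this]
    rw [← hfin]
    refine Finset.sum_congr rfl fun s hs => ?_
    rw [Nat.choose_self, hP]
    simp
  · rintro q ⟨h0, h1, h2, _⟩
    funext r
    induction r using Nat.strong_induction_on with
    | _ r ih =>
      by_cases hr : n ≤ r
      · rw [h0 r hr, Qf_top n k r hn hr]
      · push_neg at hr
        rcases Nat.eq_zero_or_pos r with h | h
        · subst h; rw [h1, Qf_zero]
        · rw [h2 r h (by omega), Qf_mid n k r h (by omega)]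
          congr 1
          exact Finset.sum_congr rfl fun s hs => by rw [ih s (Finset.mem_Ico.mp hs).2]
end

section
/- Let k = n. Then the numbers q_r = Σ_{j=0}^{r} C(r,j)·(−2)^{r−j}/(2^{n−j} − 1), for r = 0,…,n−1, satisfy the recursive system q_0 = 1/(2^n − 1) and q_r = (Σ_{s=0}^{r−1} C(r,s) q_s)/(2^{n−r} − 1) for all 1 ≤ r ≤ n−1. -/
open Finset

private lemma alt_sum (m : ℕ) :
    ∑ t ∈ Finset.range (m + 1), (m.choose t : ℝ) * (-2 : ℝ) ^ t = (-1 : ℝ) ^ m := by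
  have h := add_pow (-2 : ℝ) 1 m
  simp only [one_pow, mul_one] at h
  rw [show (-2 : ℝ) + 1 = -1 by ring] at h
  rw [h]
  exact Finset.sum_congr rfl fun t _ => by ring

private lemma alt_sum' (m : ℕ) (hm : 1 ≤ m) :
    ∑ t ∈ Finset.range m, (m.choose t : ℝ) * (-2 : ℝ) ^ t
      = (-1 : ℝ) ^ m - (-2 : ℝ) ^ m := by
  have h := alt_sum m
  rw [Finset.sum_range_succ, Nat.choose_self] at h
  push_cast at h
  linarith

private lemma zero_alt (r : ℕ) (hr : 1 ≤ r) :
    ∑ j ∈ Finset.range (r + 1), (r.choose j : ℝ) * (-1 : ℝ) ^ (r - j) = 0 := by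
  have h := add_pow (1 : ℝ) (-1) r
  simp only [one_pow, one_mul] at h
  rw [show (1 : ℝ) + -1 = 0 by ring, zero_pow (by omega : r ≠ 0)] at h
  rw [h]
  exact Finset.sum_congr rfl fun j _ => by ring

/-- For `k = n`, the closed form `q_r = ∑_{j=0}^r C(r,j)(-2)^{r-j}/(2^{n-j}-1)`
satisfies the recursive system `q_0 = 1/(2^n - 1)` and
`q_r = (∑_{s=0}^{r-1} C(r,s) q_s)/(2^{n-r} - 1)` for `1 ≤ r ≤ n-1`. -/
theorem stmt7 (n : ℕ) (hn : 1 ≤ n)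
    (q : ℕ → ℝ)
    (hq : ∀ r, q r = ∑ j ∈ Finset.range (r + 1),
      (r.choose j : ℝ) * (-2 : ℝ) ^ (r - j) / ((2 : ℝ) ^ (n - j) - 1)) :
    q 0 = 1 / ((2 : ℝ) ^ n - 1) ∧
    ∀ r, 1 ≤ r → r ≤ n - 1 →
      q r = (∑ s ∈ Finset.range r, (r.choose s : ℝ) * q s) /
            ((2 : ℝ) ^ (n - r) - 1) := by
  have hD : ∀ j : ℕ, j ≤ n - 1 → (2 : ℝ) ^ (n - j) - 1 ≠ 0 := by
    intro j hj
    have h1 : 1 ≤ n - j := by omega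
    have : (2 : ℝ) ^ 1 ≤ (2 : ℝ) ^ (n - j) :=
      pow_le_pow_right₀ (by norm_num) h1
    norm_num at this ⊢
    linarith
  constructor
  · rw [hq 0]; simp
  intro r hr hrn
  have hDr : (2 : ℝ) ^ (n - r) - 1 ≠ 0 := hD r hrn
  rw [eq_div_iff hDr]
  -- LHS transformation
  rw [hq r, Finset.sum_mul]
  have lhs_eq : ∀ j ∈ Finset.range (r + 1),
      (r.choose j : ℝ) * (-2 : ℝ) ^ (r - j) / ((2 : ℝ) ^ (n - j) - 1)
        * ((2 : ℝ) ^ (n - r) - 1)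
      = (r.choose j : ℝ) * (-1 : ℝ) ^ (r - j)
        + (r.choose j : ℝ) * ((-1 : ℝ) ^ (r - j) - (-2 : ℝ) ^ (r - j))
          / ((2 : ℝ) ^ (n - j) - 1) := by
    intro j hj
    rw [Finset.mem_range] at hj
    have hjr : j ≤ r := by omega
    have hDj : (2 : ℝ) ^ (n - j) - 1 ≠ 0 := hD j (by omega)
    have hpow : (2 : ℝ) ^ (n - r) * (2 : ℝ) ^ (r - j) = (2 : ℝ) ^ (n - j) := by
      rw [← pow_add]; congr 1; omega
    have hm2 : (-2 : ℝ) ^ (r - j) = (-1 : ℝ) ^ (r - j) * (2 : ℝ) ^ (r - j) := by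
      rw [← neg_one_mul, mul_pow]
    field_simp
    linear_combination ((r.choose j : ℝ)) * 2 ^ (n - r) * hm2
      + ((r.choose j : ℝ)) * (-1 : ℝ) ^ (r - j) * hpow
  rw [Finset.sum_congr rfl lhs_eq, Finset.sum_add_distrib, zero_alt r hr, zero_add]
  -- drop last term of the remaining sum (it is zero)
  rw [Finset.sum_range_succ, Nat.sub_self]
  simp only [pow_zero, sub_self, mul_zero, zero_div, add_zero]
  -- RHS transformation
  have rhs_eq : ∀ s ∈ Finset.range r, (r.choose s : ℝ) * q s
      = ∑ j ∈ Finset.range (s + 1),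
          (r.choose s : ℝ) * ((s.choose j : ℝ) * (-2 : ℝ) ^ (s - j)
            / ((2 : ℝ) ^ (n - j) - 1)) := by
    intro s _
    rw [hq s, Finset.mul_sum]
  rw [Finset.sum_congr rfl rhs_eq]
  rw [Finset.sum_comm' (t' := Finset.range r) (s' := fun j => Finset.Ico j r)
    (by intro x y; simp only [Finset.mem_range, Finset.mem_Ico]; omega)]
  refine Finset.sum_congr rfl fun j hj => ?_
  rw [Finset.mem_range] at hj
  -- inner sum over s ∈ Ico j r
  have key : ∑ s ∈ Finset.Ico j r, (r.choose s : ℝ) * ((s.choose j : ℝ)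
      * (-2 : ℝ) ^ (s - j) / ((2 : ℝ) ^ (n - j) - 1))
      = (r.choose j : ℝ) * ((-1 : ℝ) ^ (r - j) - (-2 : ℝ) ^ (r - j))
          / ((2 : ℝ) ^ (n - j) - 1) := by
    rw [Finset.sum_Ico_eq_sum_range]
    have step : ∀ t ∈ Finset.range (r - j),
        (r.choose (j + t) : ℝ) * (((j + t).choose j : ℝ)
          * (-2 : ℝ) ^ (j + t - j) / ((2 : ℝ) ^ (n - j) - 1))
        = (r.choose j : ℝ) * (((r - j).choose t : ℝ) * (-2 : ℝ) ^ t)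
            / ((2 : ℝ) ^ (n - j) - 1) := by
      intro t ht
      rw [Finset.mem_range] at ht
      have h1 : j + t ≤ r := by omega
      have h2 : j ≤ j + t := by omega
      have hc := (Nat.choose_mul h2 : r.choose (j + t) * (j + t).choose j = _)
      have hc' : (r.choose (j + t) : ℝ) * ((j + t).choose j : ℝ)
          = (r.choose j : ℝ) * ((r - j).choose (j + t - j) : ℝ) := by
        exact_mod_cast congrArg (Nat.cast : ℕ → ℝ) hc
      rw [show j + t - j = t from by omega] at hc' ⊢
      rw [mul_div_assoc'] at *
      rw [← mul_assoc, hc', mul_assoc]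
    rw [Finset.sum_congr rfl step, ← Finset.sum_div, ← Finset.mul_sum,
      alt_sum' (r - j) (by omega)]
  rw [key]
end

section
/- Let k = n and define q_r = Σ_{j=0}^{r} C(r,j)·(−2)^{r−j}/(2^{n−j}−1) for r = 0,…,n−1. Then Σ_{s=0}^{n−1} C(n,s)·q_s = 1. -/
open Finset

lemma aux_inner (m : ℕ) (hm : 1 ≤ m) :
    (∑ t ∈ Finset.range m, (m.choose t : ℝ) * (-2 : ℝ) ^ t) / ((2 : ℝ) ^ m - 1)
      = -(-1 : ℝ) ^ m := by
  have h2 : (2 : ℝ) ^ m - 1 ≠ 0 := by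
    have : (2 : ℝ) ^ 1 ≤ 2 ^ m := by
      apply pow_le_pow_right₀ (by norm_num) hm
    simp at this; nlinarith
  have hsum : ∑ t ∈ Finset.range (m + 1), (m.choose t : ℝ) * (-2 : ℝ) ^ t
      = (-1 : ℝ) ^ m := by
    have h := add_pow (-2 : ℝ) 1 m
    simp only [one_pow, mul_one] at h
    rw [show ((-2 : ℝ) + 1) = -1 by norm_num] at h
    rw [h]
    exact Finset.sum_congr rfl fun t _ => by ring
  have hsplit := Finset.sum_range_succ (fun t => (m.choose t : ℝ) * (-2 : ℝ) ^ t) m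
  rw [hsum] at hsplit
  have h3 : ∑ t ∈ Finset.range m, (m.choose t : ℝ) * (-2 : ℝ) ^ t
      = (-1 : ℝ) ^ m - (-2 : ℝ) ^ m := by
    simp only [Nat.choose_self, Nat.cast_one, one_mul] at hsplit
    linarith
  rw [h3]
  rw [show ((-2 : ℝ)) = (-1) * 2 by norm_num, mul_pow]
  field_simp
  ring

/-- For `k = n`, with `q_r = ∑_{j=0}^r C(r,j)(-2)^{r-j}/(2^{n-j}-1)`, one has
`∑_{s=0}^{n-1} C(n,s) q_s = 1`. -/
theorem stmt8 (n : ℕ) (hn : 1 ≤ n)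
    (q : ℕ → ℝ)
    (hq : ∀ r, q r = ∑ j ∈ Finset.range (r + 1),
      (r.choose j : ℝ) * (-2 : ℝ) ^ (r - j) / ((2 : ℝ) ^ (n - j) - 1)) :
    ∑ s ∈ Finset.range n, (n.choose s : ℝ) * q s = 1 := by
  have step1 : ∑ s ∈ Finset.range n, (n.choose s : ℝ) * q s
      = ∑ j ∈ Finset.range n, ∑ s ∈ Finset.Ico j n,
          (n.choose s : ℝ) * ((s.choose j : ℝ) * (-2 : ℝ) ^ (s - j) / ((2 : ℝ) ^ (n - j) - 1)) := by
    simp only [hq, Finset.mul_sum]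
    have hcomm := Finset.sum_Ico_Ico_comm 0 n
      (fun j s => (n.choose s : ℝ) * ((s.choose j : ℝ) * (-2 : ℝ) ^ (s - j) / ((2 : ℝ) ^ (n - j) - 1)))
    simp only [← Finset.range_eq_Ico] at hcomm
    rw [← hcomm]
  rw [step1]
  have step2 : ∀ j ∈ Finset.range n,
      (∑ s ∈ Finset.Ico j n,
        (n.choose s : ℝ) * ((s.choose j : ℝ) * (-2 : ℝ) ^ (s - j) / ((2 : ℝ) ^ (n - j) - 1)))
      = (n.choose j : ℝ) * (-(-1 : ℝ) ^ (n - j)) := by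
    intro j hj
    rw [Finset.mem_range] at hj
    rw [Finset.sum_Ico_eq_sum_range]
    have heq : ∀ t ∈ Finset.range (n - j),
        (n.choose (j + t) : ℝ) * (((j + t).choose j : ℝ) * (-2 : ℝ) ^ (j + t - j) / ((2 : ℝ) ^ (n - j) - 1))
        = (n.choose j : ℝ) * (((n - j).choose t : ℝ) * (-2 : ℝ) ^ t / ((2 : ℝ) ^ (n - j) - 1)) := by
      intro t ht
      rw [Finset.mem_range] at ht
      have h1 : j + t ≤ n := by omega
      have h2 : j ≤ j + t := by omega
      have hnc := Nat.choose_mul (n := n) h2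
      rw [show j + t - j = t from by omega] at hnc ⊢
      have hc : (n.choose (j + t) : ℝ) * ((j + t).choose j : ℝ)
          = (n.choose j : ℝ) * ((n - j).choose t : ℝ) := by
        exact_mod_cast congrArg (Nat.cast : ℕ → ℝ) hnc
      rw [show (n.choose (j + t) : ℝ) * (((j + t).choose j : ℝ) * (-2 : ℝ) ^ t / ((2 : ℝ) ^ (n - j) - 1))
          = ((n.choose (j + t) : ℝ) * ((j + t).choose j : ℝ)) * ((-2 : ℝ) ^ t / ((2 : ℝ) ^ (n - j) - 1)) from by ring,
        hc]
      ring
    rw [Finset.sum_congr rfl heq]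
    have hfac : ∑ t ∈ Finset.range (n - j),
        (n.choose j : ℝ) * (((n - j).choose t : ℝ) * (-2 : ℝ) ^ t / ((2 : ℝ) ^ (n - j) - 1))
        = (n.choose j : ℝ) *
          ((∑ t ∈ Finset.range (n - j), ((n - j).choose t : ℝ) * (-2 : ℝ) ^ t) / ((2 : ℝ) ^ (n - j) - 1)) := by
      rw [Finset.sum_div, Finset.mul_sum]
    rw [hfac, aux_inner (n - j) (by omega)]
  rw [Finset.sum_congr rfl step2]
  have hfull : ∑ j ∈ Finset.range (n + 1), (n.choose j : ℝ) * (-1 : ℝ) ^ (n - j) = 0 := by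
    have h := add_pow (1 : ℝ) (-1 : ℝ) n
    simp only [one_pow, one_mul] at h
    rw [show ((1 : ℝ) + -1) = 0 by norm_num, zero_pow (by omega : n ≠ 0)] at h
    calc ∑ j ∈ Finset.range (n + 1), (n.choose j : ℝ) * (-1 : ℝ) ^ (n - j)
        = ∑ j ∈ Finset.range (n + 1), (-1 : ℝ) ^ (n - j) * (n.choose j : ℝ) :=
          Finset.sum_congr rfl fun j _ => by ring
      _ = 0 := h.symm
  have hsplit := Finset.sum_range_succ (fun j => (n.choose j : ℝ) * (-1 : ℝ) ^ (n - j)) n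
  rw [hfull] at hsplit
  simp only [Nat.choose_self, Nat.cast_one, one_mul, Nat.sub_self, pow_zero] at hsplit
  have hneg : ∑ j ∈ Finset.range n, (n.choose j : ℝ) * (-(-1 : ℝ) ^ (n - j))
      = -∑ j ∈ Finset.range n, (n.choose j : ℝ) * (-1 : ℝ) ^ (n - j) := by
    rw [← Finset.sum_neg_distrib]
    apply Finset.sum_congr rfl
    intro j _; ring
  rw [hneg]
  linarith
end

section
/- For k = 1 (order of explanation 1), the joint Shapley value coincides with the classical Shapley value: the unique solution of the recursion q_0 = 1/n, q_r = (C(r,r−1)·q_{r−1})/(n−r) for 1 ≤ r ≤ n−1 is q_r = r!(n−r−1)!/n!, and hence φ_T^J(v) = Σ_{S ⊆ N∖{i}} (|S|!(n−|S|−1)!/n!)[v(S∪{i}) − v(S)] for each singleton T = {i}. -/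
open Finset

/-- For order of explanation `k = 1`, the joint Shapley value coincides with the
classical Shapley value: the unique solution of the recursion `q_0 = 1/n`,
`q_r = (C(r, r-1) q_{r-1})/(n - r)` is `q_r = r!(n-r-1)!/n!`, and hence for a
singleton `T = {i}` the joint Shapley value is the classical Shapley value. -/
theorem stmt9 (n : ℕ) (hn : 1 ≤ n)
    (q : ℕ → ℝ)
    (hq0 : q 0 = 1 / (n : ℝ))
    (hqr : ∀ r, 1 ≤ r → r ≤ n - 1 →
      q r = (r.choose (r - 1) : ℝ) * q (r - 1) / ((n : ℝ) - (r : ℝ))) :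
    (∀ r, r ≤ n - 1 →
      q r = (r.factorial : ℝ) * ((n - r - 1).factorial : ℝ) / (n.factorial : ℝ)) ∧
    (∀ v : Finset (Fin n) → ℝ, v ∅ = 0 → ∀ i : Fin n,
      ∑ S ∈ ({i} : Finset (Fin n))ᶜ.powerset, q S.card * (v (S ∪ {i}) - v S) =
      ∑ S ∈ ({i} : Finset (Fin n))ᶜ.powerset,
        (S.card.factorial : ℝ) * ((n - S.card - 1).factorial : ℝ) / (n.factorial : ℝ)
          * (v (S ∪ {i}) - v S)) := by
  have key : ∀ r, r ≤ n - 1 →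
      q r = (r.factorial : ℝ) * ((n - r - 1).factorial : ℝ) / (n.factorial : ℝ) := by
    intro r
    induction r with
    | zero =>
      intro _
      rw [hq0]
      have hn' : n = (n - 1) + 1 := (Nat.succ_pred_eq_of_pos hn).symm
      rw [show n.factorial = n * (n-1).factorial by
        conv_lhs => rw [hn']
        rw [Nat.factorial_succ, ← hn']]
      have hnn : (n : ℝ) ≠ 0 := Nat.cast_ne_zero.mpr (by omega)
      simp [Nat.factorial]
      field_simp
    | succ r ih =>
      intro hr
      have hr' : r ≤ n - 1 := by omega
      have h1 : 1 ≤ r + 1 := by omega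
      rw [hqr (r+1) h1 hr]
      simp only [Nat.add_sub_cancel]
      rw [ih hr']
      have hch : ((r+1).choose r : ℝ) = (r + 1 : ℝ) := by
        rw [Nat.choose_succ_self_right]; push_cast; ring
      simp only [Nat.add_sub_cancel, hch]
      have e1 : n - r - 1 = (n - (r+1) - 1) + 1 := by omega
      have e2 : ((n - (r+1) - 1 : ℕ) : ℝ) + 1 = (n : ℝ) - ((r:ℝ) + 1) := by
        have h2 : n - (r+1) - 1 = n - (r+2) := by omega
        rw [h2, Nat.cast_sub (show r+2 ≤ n by omega)]
        push_cast; ring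
      have hne : (n:ℝ) - ((r:ℝ)+1) ≠ 0 := by
        have : (r:ℝ)+1 < n := by exact_mod_cast (show r+1<n by omega)
        linarith
      have hnf : (n.factorial : ℝ) ≠ 0 := Nat.cast_ne_zero.mpr n.factorial_ne_zero
      rw [e1, Nat.factorial_succ, Nat.factorial_succ]
      push_cast
      rw [e2]
      field_simp
  refine ⟨key, fun v hv i => ?_⟩
  apply Finset.sum_congr rfl
  intro S hS
  have hcard : S.card ≤ n - 1 := by
    have := Finset.card_le_card (Finset.mem_powerset.mp hS)
    simpa [Finset.card_compl] using this
  rw [key S.card hcard]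
end

section
/- Fix 1 ≤ k ≤ n and define φ_T^J(v) = Σ_{S ⊆ N∖T} q_{|S|}·[v(S∪T) − v(S)] where (q_0,…,q_{n−1}) solves the recursive system q_0 = 1/(Σ_{i=1}^{k} C(n,i)), q_r = (Σ_{s=max(r−k,0)}^{r−1} C(r,s)q_s)/(Σ_{s=1}^{min(k,n−r)} C(n−r,s)). Then for every game v, Σ over nonempty T ⊆ N with |T| ≤ k of φ_T^J(v) equals v(N) (joint efficiency). -/
open Finset

lemma myregroup {α : Type*} [DecidableEq α] (s : Finset α) (f : ℕ → ℝ) :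
    ∑ T ∈ s.powerset, f T.card = ∑ j ∈ Finset.range (s.card + 1), (s.card.choose j : ℝ) * f j := by
  rw [Finset.sum_powerset]
  refine Finset.sum_congr rfl fun j hj => ?_
  rw [Finset.sum_powersetCard, nsmul_eq_mul]

def gfun (q : ℕ → ℝ) (k w : ℕ) : ℝ :=
  ∑ j ∈ Finset.range (w + 1), (w.choose j : ℝ) * (if 1 ≤ j ∧ j ≤ k then q (w - j) else 0)

def efun (k m : ℕ) : ℝ :=
  ∑ j ∈ Finset.range (m + 1), (m.choose j : ℝ) * (if 1 ≤ j ∧ j ≤ k then 1 else 0)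

lemma subset_compl_comm' {α : Type*} [Fintype α] [DecidableEq α] {S T : Finset α} :
    S ⊆ Tᶜ ↔ T ⊆ Sᶜ := by
  constructor <;> intro h x hx <;> rw [Finset.mem_compl] <;>
    exact fun hc => (Finset.mem_compl.mp (h hc)) hx

lemma master (n k : ℕ) (q : ℕ → ℝ) (v : Finset (Fin n) → ℝ) :
    ∑ T ∈ univ.filter (fun T : Finset (Fin n) => T.Nonempty ∧ T.card ≤ k),
      (∑ S ∈ Tᶜ.powerset, q S.card * (v (S ∪ T) - v S))
    = ∑ W ∈ (univ : Finset (Fin n)).powerset,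
        (gfun q k W.card - q W.card * efun k (n - W.card)) * v W := by
  have part1 : ∀ T : Finset (Fin n),
      ∑ S ∈ Tᶜ.powerset, q S.card * v (S ∪ T)
      = ∑ W ∈ (univ : Finset (Fin n)).powerset,
          (if T ⊆ W then q (W.card - T.card) * v W else 0) := by
    intro T
    rw [← Finset.sum_filter]
    refine Finset.sum_nbij' (i := fun S => S ∪ T) (j := fun W => W \ T) ?_ ?_ ?_ ?_ ?_
    · intro S hS
      simp only [Finset.mem_filter, Finset.mem_powerset]
      exact ⟨Finset.subset_univ _, Finset.subset_union_right⟩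
    · intro W hW
      simp only [Finset.mem_powerset]
      intro x hx
      rw [Finset.mem_compl]
      exact (Finset.mem_sdiff.mp hx).2
    · intro S hS
      rw [Finset.mem_powerset] at hS
      exact Finset.union_sdiff_cancel_right
        (Finset.disjoint_left.mpr fun x hxS hxT => (Finset.mem_compl.mp (hS hxS)) hxT)
    · intro W hW
      simp only [Finset.mem_filter] at hW
      exact Finset.sdiff_union_of_subset hW.2
    · intro S hS
      rw [Finset.mem_powerset] at hS
      have hd : Disjoint S T :=
        Finset.disjoint_left.mpr fun x hxS hxT => (Finset.mem_compl.mp (hS hxS)) hxT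
      rw [Finset.card_union_of_disjoint hd]
      simp
  have part2 : ∀ T : Finset (Fin n),
      ∑ S ∈ Tᶜ.powerset, q S.card * v S
      = ∑ S ∈ (univ : Finset (Fin n)).powerset,
          (if T ⊆ Sᶜ then q S.card * v S else 0) := by
    intro T
    rw [← Finset.sum_filter]
    apply Finset.sum_congr _ (fun _ _ => rfl)
    ext S
    simp only [Finset.mem_powerset, Finset.mem_filter]
    constructor
    · intro h; exact ⟨Finset.subset_univ _, subset_compl_comm'.mp h⟩
    · intro h; exact subset_compl_comm'.mpr h.2
  simp_rw [mul_sub, Finset.sum_sub_distrib]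
  rw [Finset.sum_congr rfl (fun T _ => part1 T), Finset.sum_congr rfl (fun T _ => part2 T),
    Finset.sum_comm (s := univ.filter (fun T : Finset (Fin n) => T.Nonempty ∧ T.card ≤ k)),
    Finset.sum_comm (s := univ.filter (fun T : Finset (Fin n) => T.Nonempty ∧ T.card ≤ k)),
    ← Finset.sum_sub_distrib]
  refine Finset.sum_congr rfl fun W hW => ?_
  rw [Finset.mem_powerset] at hW
  have hg : ∑ T ∈ univ.filter (fun T : Finset (Fin n) => T.Nonempty ∧ T.card ≤ k),
      (if T ⊆ W then q (W.card - T.card) * v W else 0) = gfun q k W.card * v W := by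
    rw [← Finset.sum_filter]
    have hset : (univ.filter (fun T : Finset (Fin n) => T.Nonempty ∧ T.card ≤ k)).filter
        (fun T => T ⊆ W) = W.powerset.filter (fun T => T.Nonempty ∧ T.card ≤ k) := by
      ext T
      simp only [Finset.mem_filter, Finset.mem_powerset, Finset.mem_univ, true_and]
      tauto
    rw [hset, Finset.sum_filter]
    have : ∀ T ∈ W.powerset,
        (if T.Nonempty ∧ T.card ≤ k then q (W.card - T.card) * v W else 0)
        = (fun c => (if 1 ≤ c ∧ c ≤ k then q (W.card - c) else 0) * v W) T.card := by
      intro T hT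
      simp only [Finset.one_le_card]
      split_ifs <;> simp
    rw [Finset.sum_congr rfl this, myregroup W (fun c => (if 1 ≤ c ∧ c ≤ k then q (W.card - c) else 0) * v W)]
    unfold gfun
    rw [Finset.sum_mul]
    refine Finset.sum_congr rfl fun j _ => by ring
  have he : ∑ T ∈ univ.filter (fun T : Finset (Fin n) => T.Nonempty ∧ T.card ≤ k),
      (if T ⊆ Wᶜ then q W.card * v W else 0)
      = q W.card * efun k (n - W.card) * v W := by
    rw [← Finset.sum_filter]
    have hset : (univ.filter (fun T : Finset (Fin n) => T.Nonempty ∧ T.card ≤ k)).filter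
        (fun T => T ⊆ Wᶜ) = Wᶜ.powerset.filter (fun T => T.Nonempty ∧ T.card ≤ k) := by
      ext T
      simp only [Finset.mem_filter, Finset.mem_powerset, Finset.mem_univ, true_and]
      tauto
    rw [hset, Finset.sum_filter]
    have : ∀ T ∈ Wᶜ.powerset,
        (if T.Nonempty ∧ T.card ≤ k then q W.card * v W else 0)
        = (fun c => (if 1 ≤ c ∧ c ≤ k then (1:ℝ) else 0) * (q W.card * v W)) T.card := by
      intro T hT
      simp only [Finset.one_le_card]
      split_ifs <;> simp
    rw [Finset.sum_congr rfl this,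
      myregroup Wᶜ (fun c => (if 1 ≤ c ∧ c ≤ k then (1:ℝ) else 0) * (q W.card * v W))]
    have hcc : (Wᶜ : Finset (Fin n)).card = n - W.card := by
      rw [Finset.card_compl, Fintype.card_fin]
    rw [hcc]
    unfold efun
    simp only [Finset.mul_sum, Finset.sum_mul]
    refine Finset.sum_congr rfl fun j _ => by ring
  rw [hg, he]
  ring



lemma efun_eval (k m : ℕ) : efun k m = ∑ i ∈ Finset.Icc 1 (min k m), (m.choose i : ℝ) := by
  unfold efun
  simp_rw [mul_ite, mul_one, mul_zero]
  rw [← Finset.sum_filter]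
  congr 1
  ext j
  simp only [Finset.mem_filter, Finset.mem_range, Finset.mem_Icc]
  omega

lemma gfun_eval (q : ℕ → ℝ) (k r : ℕ) :
    gfun q k r = ∑ s ∈ Finset.Ico (r - k) r, (r.choose s : ℝ) * q s := by
  unfold gfun
  simp_rw [mul_ite, mul_zero]
  rw [← Finset.sum_filter]
  have hset : (Finset.range (r + 1)).filter (fun j => 1 ≤ j ∧ j ≤ k)
      = Finset.Icc 1 (min k r) := by
    ext j
    simp only [Finset.mem_filter, Finset.mem_range, Finset.mem_Icc]
    omega
  rw [hset]
  refine Finset.sum_nbij' (i := fun j => r - j) (j := fun s => r - s) ?_ ?_ ?_ ?_ ?_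
  · intro j hj; rw [Finset.mem_Icc] at hj; rw [Finset.mem_Ico]; omega
  · intro s hs; rw [Finset.mem_Ico] at hs; rw [Finset.mem_Icc]; omega
  · intro j hj; rw [Finset.mem_Icc] at hj; omega
  · intro s hs; rw [Finset.mem_Ico] at hs; omega
  · intro j hj
    rw [Finset.mem_Icc] at hj
    rw [Nat.choose_symm (by omega : j ≤ r)]

lemma sum_choose_pos (k m : ℕ) (hk : 1 ≤ k) (hm : 1 ≤ m) :
    0 < ∑ i ∈ Finset.Icc 1 (min k m), (m.choose i : ℝ) := by
  have h1 : (1 : ℕ) ∈ Finset.Icc 1 (min k m) := by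
    rw [Finset.mem_Icc]; omega
  calc (0:ℝ) < (m.choose 1 : ℝ) := by rw [Nat.choose_one_right]; exact_mod_cast hm
    _ ≤ _ := Finset.single_le_sum (f := fun i => (m.choose i : ℝ)) (fun i _ => by positivity) h1

/-- Joint efficiency of the joint Shapley value: summing `φ^J_T(v)` over all
nonempty coalitions `T` with `|T| ≤ k` gives `v(N)`. -/
theorem stmt10 (n k : ℕ) (hn : 1 ≤ n) (hk1 : 1 ≤ k) (hkn : k ≤ n)
    (q : ℕ → ℝ)
    (hq0 : q 0 = 1 / ∑ i ∈ Finset.Icc 1 k, (n.choose i : ℝ))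
    (hqr : ∀ r, 1 ≤ r → r ≤ n - 1 →
      q r = (∑ s ∈ Finset.Ico (r - k) r, (r.choose s : ℝ) * q s) /
            (∑ s ∈ Finset.Icc 1 (min k (n - r)), ((n - r).choose s : ℝ))) :
    ∀ v : Finset (Fin n) → ℝ, v ∅ = 0 →
      ∑ T ∈ univ.filter (fun T : Finset (Fin n) => T.Nonempty ∧ T.card ≤ k),
        (∑ S ∈ Tᶜ.powerset, q S.card * (v (S ∪ T) - v S)) = v univ := by
  intro v hv0
  have hcoef : ∀ r, 1 ≤ r → r ≤ n - 1 → gfun q k r = q r * efun k (n - r) := by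
    intro r h1 h2
    have hne : (∑ s ∈ Finset.Icc 1 (min k (n - r)), ((n - r).choose s : ℝ)) ≠ 0 :=
      ne_of_gt (sum_choose_pos k (n - r) hk1 (by omega))
    rw [gfun_eval, hqr r h1 h2, efun_eval, div_mul_cancel₀ _ hne]
  have reduced : ∀ w : Finset (Fin n) → ℝ, w ∅ = 0 →
      ∑ T ∈ univ.filter (fun T : Finset (Fin n) => T.Nonempty ∧ T.card ≤ k),
        (∑ S ∈ Tᶜ.powerset, q S.card * (w (S ∪ T) - w S)) = gfun q k n * w univ := by
    intro w hw
    rw [master n k q w]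
    rw [Finset.sum_eq_single_of_mem univ (Finset.mem_powerset_self _)]
    · have he0 : efun k 0 = 0 := by simp [efun]
      rw [Finset.card_univ, Fintype.card_fin, Nat.sub_self, he0, mul_zero, sub_zero]
    · intro W hWmem hWne
      by_cases hWe : W = ∅
      · subst hWe; rw [hw, mul_zero]
      · have h1 : 1 ≤ W.card := Finset.one_le_card.mpr (Finset.nonempty_iff_ne_empty.mpr hWe)
        have hlt : W.card < n := by
          have h := Finset.card_lt_card
            (Finset.ssubset_iff_subset_ne.mpr ⟨Finset.mem_powerset.mp hWmem, hWne⟩)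
          rwa [Finset.card_univ, Fintype.card_fin] at h
        rw [hcoef W.card h1 (by omega), sub_self, zero_mul]
  have hNE : Nonempty (Fin n) := ⟨⟨0, hn⟩⟩
  have huniv_ne : (univ : Finset (Fin n)) ≠ ∅ :=
    Finset.nonempty_iff_ne_empty.mp Finset.univ_nonempty
  set v1 : Finset (Fin n) → ℝ := fun S => if S = ∅ then 0 else 1 with hv1def
  have hv1e : v1 ∅ = 0 := by simp [v1]
  have hcard : ∑ T ∈ univ.filter (fun T : Finset (Fin n) => T.Nonempty ∧ T.card ≤ k),
      (1 : ℝ) = efun k n := by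
    conv_lhs => rw [← Finset.powerset_univ]
    rw [Finset.sum_filter]
    have hc : ∀ T ∈ (univ : Finset (Fin n)).powerset,
        (if T.Nonempty ∧ T.card ≤ k then (1:ℝ) else 0)
        = (fun c => if 1 ≤ c ∧ c ≤ k then (1:ℝ) else 0) T.card := by
      intro T hT
      simp only [Finset.one_le_card]
    rw [Finset.sum_congr rfl hc, myregroup (univ : Finset (Fin n)) (fun c => if 1 ≤ c ∧ c ≤ k then (1:ℝ) else 0), Finset.card_univ, Fintype.card_fin]
    unfold efun
    exact Finset.sum_congr rfl fun j _ => by ring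
  have hLHS1 : ∑ T ∈ univ.filter (fun T : Finset (Fin n) => T.Nonempty ∧ T.card ≤ k),
      (∑ S ∈ Tᶜ.powerset, q S.card * (v1 (S ∪ T) - v1 S)) = q 0 * efun k n := by
    have hinner : ∀ T ∈ univ.filter (fun T : Finset (Fin n) => T.Nonempty ∧ T.card ≤ k),
        (∑ S ∈ Tᶜ.powerset, q S.card * (v1 (S ∪ T) - v1 S)) = q 0 := by
      intro T hT
      rw [Finset.mem_filter] at hT
      have hstep : ∀ S ∈ (Tᶜ : Finset (Fin n)).powerset,
          q S.card * (v1 (S ∪ T) - v1 S) = if S = ∅ then q 0 else 0 := by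
        intro S hS
        have hun : S ∪ T ≠ ∅ := by
          intro h
          exact Finset.not_nonempty_empty (h ▸ hT.2.1.mono Finset.subset_union_right)
        simp only [hv1def, hun, if_neg hun]
        split_ifs with h
        · subst h; simp
        · simp
      rw [Finset.sum_congr rfl hstep, Finset.sum_ite_eq' (Tᶜ).powerset ∅ (fun _ => q 0),
        if_pos (Finset.empty_mem_powerset _)]
    rw [Finset.sum_congr rfl hinner, ← hcard, Finset.mul_sum]
    exact Finset.sum_congr rfl fun T _ => by ring
  have hq0e : q 0 * efun k n = 1 := by
    have hne : (∑ i ∈ Finset.Icc 1 k, (n.choose i : ℝ)) ≠ 0 := by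
      have := sum_choose_pos k n hk1 hn
      rw [min_eq_left hkn] at this
      exact ne_of_gt this
    rw [hq0, efun_eval, min_eq_left hkn, one_div, inv_mul_cancel₀ hne]
  have hgn : gfun q k n = 1 := by
    have h := reduced v1 hv1e
    rw [hLHS1, hq0e] at h
    have : v1 univ = 1 := by simp [hv1def, huniv_ne]
    rw [this, mul_one] at h
    exact h.symm
  rw [reduced v hv0, hgn, one_mul]
end

section
/- Fix 1 ≤ k ≤ n and define the joint Shapley value φ_T^J(v) = Σ_{S⊆N∖T} q_{|S|}[v(S∪T)−v(S)] with (q_r) solving the standard recursion. Then φ^J satisfies joint symmetry: if nonempty T, T' ⊆ N and the game v satisfies (1) v(S∪T) = v(S∪T') for all S ⊆ N∖(T∪T'), (2) v(S∪T) = v(S) for all S ⊆ N∖T with S ∩ T' ≠ ∅, and (3) v(S∪T') = v(S) for all S ⊆ N∖T' with S ∩ T ≠ ∅, then φ_T^J(v) = φ_{T'}^J(v). -/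
open Finset

/-- The joint Shapley value satisfies joint symmetry. -/
theorem stmt13 (n k : ℕ) (hn : 1 ≤ n) (hk1 : 1 ≤ k) (hkn : k ≤ n)
    (q : ℕ → ℝ)
    (hq0 : q 0 = 1 / ∑ i ∈ Finset.Icc 1 k, (n.choose i : ℝ))
    (hqr : ∀ r, 1 ≤ r → r ≤ n - 1 →
      q r = (∑ s ∈ Finset.Ico (r - k) r, (r.choose s : ℝ) * q s) /
            (∑ s ∈ Finset.Icc 1 (min k (n - r)), ((n - r).choose s : ℝ))) :
    ∀ v : Finset (Fin n) → ℝ, v ∅ = 0 →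
      ∀ T T' : Finset (Fin n), T.Nonempty → T'.Nonempty →
      (∀ S ⊆ (T ∪ T')ᶜ, v (S ∪ T) = v (S ∪ T')) →
      (∀ S ⊆ Tᶜ, (S ∩ T').Nonempty → v (S ∪ T) = v S) →
      (∀ S ⊆ T'ᶜ, (S ∩ T).Nonempty → v (S ∪ T') = v S) →
      ∑ S ∈ Tᶜ.powerset, q S.card * (v (S ∪ T) - v S) =
      ∑ S ∈ T'ᶜ.powerset, q S.card * (v (S ∪ T') - v S) := by
  intro v hv0 T T' hT hT' h1 h2 h3
  have hsub : (T ∪ T')ᶜ.powerset ⊆ Tᶜ.powerset := by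
    intro S hS
    rw [mem_powerset] at *
    exact hS.trans (compl_subset_compl.mpr subset_union_left)
  have hsub' : (T ∪ T')ᶜ.powerset ⊆ T'ᶜ.powerset := by
    intro S hS
    rw [mem_powerset] at *
    exact hS.trans (compl_subset_compl.mpr subset_union_right)
  rw [← Finset.sum_subset hsub, ← Finset.sum_subset hsub']
  · exact Finset.sum_congr rfl fun S hS => by rw [h1 S (mem_powerset.mp hS)]
  · intro S hS hnS
    rw [mem_powerset] at hS
    rw [mem_powerset, compl_union] at hnS
    have hne : (S ∩ T).Nonempty := by
      have : ¬ S ⊆ Tᶜ := fun h => hnS (subset_inter h hS)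
      obtain ⟨x, hxS, hx⟩ := not_subset.mp this
      exact ⟨x, mem_inter.mpr ⟨hxS, by simpa using hx⟩⟩
    rw [h3 S hS hne]; ring
  · intro S hS hnS
    rw [mem_powerset] at hS
    rw [mem_powerset, compl_union] at hnS
    have hne : (S ∩ T').Nonempty := by
      have : ¬ S ⊆ T'ᶜ := fun h => hnS (subset_inter hS h)
      obtain ⟨x, hxS, hx⟩ := not_subset.mp this
      exact ⟨x, mem_inter.mpr ⟨hxS, by simpa using hx⟩⟩
    rw [h2 S hS hne]; ring
end

section
/- Fix 1 ≤ k ≤ n. Suppose an index φ of the form φ_T(v) = Σ_{S⊆N∖T} p^T(S)[v(S∪T)−v(S)] satisfies the efficiency constraint (equation with δ_N) and joint anonymity. Then the constants satisfy p^T(S) = p^{T'}(S') whenever |S| = |S'| and |T| = |T'|, for all nonempty T, T' ⊆ N, S ⊆ N∖T, S' ⊆ N∖T'. -/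
open Finset


lemma exists_perm_images {n : ℕ} (S T S' T' : Finset (Fin n))
    (hST : Disjoint S T) (hST' : Disjoint S' T')
    (hS : S.card = S'.card) (hT : T.card = T'.card) :
    ∃ σ : Equiv.Perm (Fin n), S.image σ = S' ∧ T.image σ = T' := by
  have hu : (S ∪ T).card = (S' ∪ T').card := by
    rw [card_union_of_disjoint hST, card_union_of_disjoint hST', hS, hT]
  have hcS : ((S : Finset (Fin n)) : Type) = ((S : Finset (Fin n)) : Type) := rfl
  have eS : (S : Finset (Fin n)) ≃ (S' : Finset (Fin n)) := Finset.equivOfCardEq hS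
  have eT : (T : Finset (Fin n)) ≃ (T' : Finset (Fin n)) := Finset.equivOfCardEq hT
  have hR : ((S ∪ T)ᶜ).card = ((S' ∪ T')ᶜ).card := by
    rw [card_compl, card_compl, hu]
  have eR : ((S ∪ T)ᶜ : Finset (Fin n)) ≃ ((S' ∪ T')ᶜ : Finset (Fin n)) :=
    Finset.equivOfCardEq hR
  set f : Fin n → Fin n := fun x =>
    if h : x ∈ S then (eS ⟨x, h⟩ : Fin n)
    else if h' : x ∈ T then (eT ⟨x, h'⟩ : Fin n)
    else (eR ⟨x, by simp [mem_compl, h, h']⟩ : Fin n) with hf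
  have hfS : ∀ x (h : x ∈ S), f x = (eS ⟨x, h⟩ : Fin n) := by
    intro x h; simp [hf, h]
  have hfT : ∀ x (h : x ∈ T), f x = (eT ⟨x, h⟩ : Fin n) := by
    intro x h
    have hxS : x ∉ S := fun hx => (hST.forall_ne_finset hx h) rfl
    simp [hf, hxS, h]
  have hfR : ∀ x (h : x ∈ (S ∪ T)ᶜ), f x = (eR ⟨x, h⟩ : Fin n) := by
    intro x h
    have := mem_compl.mp h
    simp only [mem_union, not_or] at this
    simp [hf, this.1, this.2]
  have hmemS : ∀ x (h : x ∈ S), f x ∈ S' := fun x h => by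
    rw [hfS x h]; exact (eS ⟨x, h⟩).2
  have hmemT : ∀ x (h : x ∈ T), f x ∈ T' := fun x h => by
    rw [hfT x h]; exact (eT ⟨x, h⟩).2
  have hmemR : ∀ x (h : x ∈ (S ∪ T)ᶜ), f x ∈ (S' ∪ T')ᶜ := fun x h => by
    rw [hfR x h]; exact (eR ⟨x, h⟩).2
  have hinj : Function.Injective f := by
    intro x y hxy
    by_cases hxs : x ∈ S
    · by_cases hys : y ∈ S
      · have := hxy; rw [hfS x hxs, hfS y hys] at this
        have := eS.injective (Subtype.coe_injective this)
        exact Subtype.mk_eq_mk.mp this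
      · exfalso
        by_cases hyt : y ∈ T
        · have h1 := hmemS x hxs; rw [hxy, hfT y hyt] at h1
          exact hST'.forall_ne_finset h1 (eT ⟨y, hyt⟩).2 rfl
        · have hy : y ∈ (S ∪ T)ᶜ := by simp [mem_compl, hys, hyt]
          have h1 := hmemS x hxs; rw [hxy] at h1
          have h2 := hmemR y hy
          exact (mem_compl.mp h2) (mem_union_left _ h1)
    · by_cases hxt : x ∈ T
      · by_cases hys : y ∈ S
        · exfalso
          have h1 := hmemT x hxt; rw [hxy] at h1
          have h2 := hmemS y hys
          exact hST'.forall_ne_finset h2 h1 rfl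
        · by_cases hyt : y ∈ T
          · have := hxy; rw [hfT x hxt, hfT y hyt] at this
            have := eT.injective (Subtype.coe_injective this)
            exact Subtype.mk_eq_mk.mp this
          · exfalso
            have hy : y ∈ (S ∪ T)ᶜ := by simp [mem_compl, hys, hyt]
            have h1 := hmemT x hxt; rw [hxy] at h1
            exact (mem_compl.mp (hmemR y hy)) (mem_union_right _ h1)
      · have hx : x ∈ (S ∪ T)ᶜ := by simp [mem_compl, hxs, hxt]
        by_cases hys : y ∈ S
        · exfalso
          have h1 := hmemR x hx; rw [hxy] at h1
          exact (mem_compl.mp h1) (mem_union_left _ (hmemS y hys))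
        · by_cases hyt : y ∈ T
          · exfalso
            have h1 := hmemR x hx; rw [hxy] at h1
            exact (mem_compl.mp h1) (mem_union_right _ (hmemT y hyt))
          · have hy : y ∈ (S ∪ T)ᶜ := by simp [mem_compl, hys, hyt]
            have := hxy; rw [hfR x hx, hfR y hy] at this
            have := eR.injective (Subtype.coe_injective this)
            exact Subtype.mk_eq_mk.mp this
  let σ : Equiv.Perm (Fin n) := Equiv.ofBijective f (Finite.injective_iff_bijective.mp hinj)
  refine ⟨σ, ?_, ?_⟩
  · apply eq_of_subset_of_card_le
    · intro y hy
      obtain ⟨x, hx, rfl⟩ := mem_image.mp hy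
      exact hmemS x hx
    · rw [card_image_of_injective _ σ.injective, hS]
  · apply eq_of_subset_of_card_le
    · intro y hy
      obtain ⟨x, hx, rfl⟩ := mem_image.mp hy
      exact hmemT x hx
    · rw [card_image_of_injective _ σ.injective, hT]


lemma eval_sum {n : ℕ} (p : Finset (Fin n) → Finset (Fin n) → ℝ)
    (T S : Finset (Fin n)) (hT : T.Nonempty) (hS : S ⊆ Tᶜ) :
    ∑ R ∈ Tᶜ.powerset, p T R *
      ((if R ∪ T = S ∪ T then (1:ℝ) else 0) - (if R = S ∪ T then (1:ℝ) else 0)) = p T S := by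
  obtain ⟨t, ht⟩ := hT
  rw [Finset.sum_eq_single S]
  · have h1 : S ∪ T = S ∪ T := rfl
    have h2 : S ≠ S ∪ T := by
      intro h
      have : t ∈ S := h ▸ mem_union_right _ ht
      exact (mem_compl.mp (hS this)) ht
    simp [h1, h2]
  · intro R hR hRS
    have hRT : R ⊆ Tᶜ := mem_powerset.mp hR
    have h1 : R ∪ T ≠ S ∪ T := by
      intro h
      apply hRS
      have : (R ∪ T) ∩ Tᶜ = (S ∪ T) ∩ Tᶜ := by rw [h]
      rwa [union_inter_distrib_right, union_inter_distrib_right,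
        Finset.inter_compl, inter_eq_left.mpr hRT, inter_eq_left.mpr hS,
        union_empty, union_empty] at this
    have h2 : R ≠ S ∪ T := by
      intro h
      have : t ∈ R := h ▸ mem_union_right _ ht
      exact (mem_compl.mp (hRT this)) ht
    simp [h1, h2]
  · intro h
    exact absurd (mem_powerset.mpr hS) h
/-- If an index of the form `φ v T = ∑_{S ⊆ N\T} p T S (v(S∪T) - v S)` satisfies
the efficiency constraint and joint anonymity, then `p T S = p T' S'` whenever
`|S| = |S'|` and `|T| = |T'|`. -/
theorem stmt14 (n k : ℕ) (hn : 1 ≤ n) (hk1 : 1 ≤ k) (hkn : k ≤ n)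
    (p : Finset (Fin n) → Finset (Fin n) → ℝ)
    (φ : (Finset (Fin n) → ℝ) → Finset (Fin n) → ℝ)
    (hrep : ∀ v : Finset (Fin n) → ℝ, v ∅ = 0 → ∀ T : Finset (Fin n), T.Nonempty →
      φ v T = ∑ S ∈ Tᶜ.powerset, p T S * (v (S ∪ T) - v S))
    (heff : ∀ S : Finset (Fin n), S.Nonempty →
      (if S = univ then (1 : ℝ) else 0) =
        (∑ T ∈ S.powerset.filter (fun T => T.Nonempty ∧ T.card ≤ k), p T (S \ T))
        - ∑ T ∈ Sᶜ.powerset.filter (fun T => T.Nonempty ∧ T.card ≤ k), p T S)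
    (hanon : ∀ σ : Equiv.Perm (Fin n), ∀ v : Finset (Fin n) → ℝ, v ∅ = 0 →
      ∀ T : Finset (Fin n), T.Nonempty →
        φ v T = φ (fun R => v (R.image σ.symm)) (T.image σ)) :
    ∀ T T' : Finset (Fin n), T.Nonempty → T'.Nonempty →
      ∀ S ⊆ Tᶜ, ∀ S' ⊆ T'ᶜ, S.card = S'.card → T.card = T'.card →
        p T S = p T' S' := by
  intro T T' hT hT' S hS S' hS' hcS hcT
  obtain ⟨σ, hσS, hσT⟩ := exists_perm_images S T S' T'
    (disjoint_left.mpr fun a ha hat => (mem_compl.mp (hS ha)) hat)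
    (disjoint_left.mpr fun a ha hat => (mem_compl.mp (hS' ha)) hat) hcS hcT
  set v : Finset (Fin n) → ℝ := fun R => if R = S ∪ T then 1 else 0 with hv
  have hv0 : v ∅ = 0 := by
    have : (∅ : Finset (Fin n)) ≠ S ∪ T := by
      obtain ⟨t, ht⟩ := hT
      intro h
      exact notMem_empty t (h ▸ mem_union_right _ ht)
    simp [hv, this]
  have himg : (S ∪ T).image σ = S' ∪ T' := by
    rw [image_union, hσS, hσT]
  have hw : ∀ R : Finset (Fin n), v (R.image σ.symm) = if R = S' ∪ T' then (1:ℝ) else 0 := by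
    intro R
    have hiff : R.image σ.symm = S ∪ T ↔ R = S' ∪ T' := by
      constructor
      · intro h
        rw [← himg, ← h, image_image]
        simp
      · intro h
        rw [h, ← himg, image_image]
        simp
    simp only [hv]
    exact if_congr hiff rfl rfl
  have e1 : φ v T = p T S := by
    rw [hrep v hv0 T hT, ← eval_sum p T S hT hS]
  have e2 : φ (fun R => v (R.image σ.symm)) T' = p T' S' := by
    have h0 : (fun R => v (R.image σ.symm)) (∅ : Finset (Fin n)) = 0 := by
      simp only [image_empty]; exact hv0
    rw [hrep (fun R => v (R.image σ.symm)) h0 T' hT', ← eval_sum p T' S' hT' hS']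
    apply Finset.sum_congr rfl
    intro R _
    rw [hw, hw]
  have := hanon σ v hv0 T hT
  rw [hσT] at this
  rw [← e1, this, e2]
end

section
/- Fix 1 ≤ k ≤ n. Suppose an index φ of the form φ_T(v) = Σ_{S⊆N∖T} p^T(S)[v(S∪T)−v(S)] satisfies joint symmetry. Then the constants satisfy p^T(S) = p^{T'}(S) for all nonempty T, T' ⊆ N and all S ⊆ N∖(T∪T'). -/
open Finset

/-- If an index of the form `φ v T = ∑_{S ⊆ N\T} p T S (v(S∪T) - v S)` satisfies
joint symmetry, then `p T S = p T' S` for all nonempty `T, T'` and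
`S ⊆ N \ (T ∪ T')`. -/
theorem stmt15 (n k : ℕ) (hn : 1 ≤ n) (hk1 : 1 ≤ k) (hkn : k ≤ n)
    (p : Finset (Fin n) → Finset (Fin n) → ℝ)
    (φ : (Finset (Fin n) → ℝ) → Finset (Fin n) → ℝ)
    (hrep : ∀ v : Finset (Fin n) → ℝ, v ∅ = 0 → ∀ T : Finset (Fin n), T.Nonempty →
      φ v T = ∑ S ∈ Tᶜ.powerset, p T S * (v (S ∪ T) - v S))
    (hsym : ∀ v : Finset (Fin n) → ℝ, v ∅ = 0 →
      ∀ T T' : Finset (Fin n), T.Nonempty → T'.Nonempty →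
      (∀ S ⊆ (T ∪ T')ᶜ, v (S ∪ T) = v (S ∪ T')) →
      (∀ S ⊆ Tᶜ, (S ∩ T').Nonempty → v (S ∪ T) = v S) →
      (∀ S ⊆ T'ᶜ, (S ∩ T).Nonempty → v (S ∪ T') = v S) →
      φ v T = φ v T') :
    ∀ T T' : Finset (Fin n), T.Nonempty → T'.Nonempty →
      ∀ S ⊆ (T ∪ T')ᶜ, p T S = p T' S := by
  intro T T' hT hT' S hS
  set N : Finset (Fin n) := T ∪ T' with hNdef
  set v : Finset (Fin n) → ℝ :=
    fun A => if A \ N = S ∧ (A ∩ N).Nonempty then 1 else 0 with hv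
  have hdisj : Disjoint S N := by
    rw [Finset.disjoint_left]
    exact fun a haS haN => (Finset.mem_compl.mp (hS haS)) haN
  have hSN : S \ N = S := hdisj.sdiff_eq_left
  have hv0 : v ∅ = 0 := by simp [hv]
  -- value of coalitions containing a nonempty piece of N
  have hvu : ∀ T₀ : Finset (Fin n), T₀.Nonempty → T₀ ⊆ N →
      ∀ S' : Finset (Fin n), v (S' ∪ T₀) = if S' \ N = S then 1 else 0 := by
    intro T₀ h0 hsub S'
    have h1 : (S' ∪ T₀) \ N = S' \ N := by
      rw [union_sdiff_distrib, sdiff_eq_empty_iff_subset.mpr hsub, union_empty]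
    have h2 : ((S' ∪ T₀) ∩ N).Nonempty :=
      h0.mono (subset_inter (subset_union_right) hsub)
    simp [hv, h1, h2]
  -- the key computation of the sum
  have key : ∀ T₀ : Finset (Fin n), T₀.Nonempty → T₀ ⊆ N →
      ∑ S' ∈ T₀ᶜ.powerset, p T₀ S' * (v (S' ∪ T₀) - v S') = p T₀ S := by
    intro T₀ h0 hsub
    rw [Finset.sum_eq_single S]
    · rw [hvu T₀ h0 hsub S, if_pos hSN]
      have h2 : v S = 0 := by
        simp only [hv]
        rw [if_neg]
        rintro ⟨-, h⟩
        rw [Finset.disjoint_iff_inter_eq_empty.mp hdisj] at h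
        exact h.ne_empty rfl
      rw [h2]; ring
    · intro S' hS' hne
      have : v (S' ∪ T₀) = v S' := by
        rw [hvu T₀ h0 hsub S']
        by_cases hc : S' \ N = S
        · have hin : (S' ∩ N).Nonempty := by
            rw [Finset.nonempty_iff_ne_empty]
            intro hemp
            apply hne
            have : S' \ N = S' := by
              rw [Finset.sdiff_eq_self_iff_disjoint, Finset.disjoint_iff_inter_eq_empty]
              exact hemp
            rw [this] at hc; exact hc
          simp [hv, hc, hin]
        · simp [hv, hc]
      rw [this]; ring
    · intro h
      exact absurd (mem_powerset.mpr (hS.trans (compl_subset_compl.mpr hsub))) h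
  have ha : ∀ S' ⊆ Nᶜ, v (S' ∪ T) = v (S' ∪ T') := by
    intro S' _
    rw [hvu T hT subset_union_left, hvu T' hT' subset_union_right]
  have hb : ∀ S' ⊆ Tᶜ, (S' ∩ T').Nonempty → v (S' ∪ T) = v S' := by
    intro S' _ hx
    have hin : (S' ∩ N).Nonempty :=
      hx.mono (inter_subset_inter (le_refl S') subset_union_right)
    rw [hvu T hT subset_union_left]
    simp [hv, hin]
  have hc : ∀ S' ⊆ T'ᶜ, (S' ∩ T).Nonempty → v (S' ∪ T') = v S' := by
    intro S' _ hx
    have hin : (S' ∩ N).Nonempty :=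
      hx.mono (inter_subset_inter (le_refl S') subset_union_left)
    rw [hvu T' hT' subset_union_right]
    simp [hv, hin]
  have := hsym v hv0 T T' hT hT' ha hb hc
  rw [hrep v hv0 T hT, hrep v hv0 T' hT',
    key T hT subset_union_left, key T' hT' subset_union_right] at this
  exact this
end

section
/- For N = {1,2} there is no index φ satisfying joint linearity, joint null, joint efficiency of order k = 2, and strong joint symmetry (where strong joint symmetry states: for nonempty T, T' ⊆ N, if v(S∪T) = v(S∪T') for all S ⊆ N∖(T∪T') then φ_T(v) = φ_{T'}(v)). -/
open Finset

/-- For `N = {1,2}` there is no index satisfying joint linearity, joint null,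
joint efficiency of order `k = 2`, and strong joint symmetry. -/
theorem stmt17 :
    ¬ ∃ φ : (Finset (Fin 2) → ℝ) → Finset (Fin 2) → ℝ,
      -- joint linearity
      (∀ v w : Finset (Fin 2) → ℝ, v ∅ = 0 → w ∅ = 0 →
        ∀ T : Finset (Fin 2), φ (v + w) T = φ v T + φ w T) ∧
      (∀ (c : ℝ) (v : Finset (Fin 2) → ℝ), v ∅ = 0 →
        ∀ T : Finset (Fin 2), φ (c • v) T = c * φ v T) ∧
      -- joint null
      (∀ v : Finset (Fin 2) → ℝ, v ∅ = 0 → ∀ T : Finset (Fin 2), T.Nonempty →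
        (∀ S ⊆ Tᶜ, v (S ∪ T) = v S) → φ v T = 0) ∧
      -- joint efficiency of order 2
      (∀ v : Finset (Fin 2) → ℝ, v ∅ = 0 →
        φ v {0} + φ v {1} + φ v univ = v univ) ∧
      -- strong joint symmetry
      (∀ v : Finset (Fin 2) → ℝ, v ∅ = 0 →
        ∀ T T' : Finset (Fin 2), T.Nonempty → T'.Nonempty →
        (∀ S ⊆ (T ∪ T')ᶜ, v (S ∪ T) = v (S ∪ T')) →
        φ v T = φ v T') := by
  rintro ⟨φ, hadd, -, hnull, heff, hsym⟩
  -- Finset facts over Fin 2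
  have e1 : (∅ : Finset (Fin 2)) ≠ {0} := by decide
  have e2 : (∅ : Finset (Fin 2)) ≠ univ := by decide
  have e3 : (univ : Finset (Fin 2)) ≠ {0} := by decide
  have e4 : ({1} : Finset (Fin 2)) ≠ {0} := by decide
  have e5 : ({1} : Finset (Fin 2)) ≠ univ := by decide
  have e6 : ({0} ∪ {1} : Finset (Fin 2)) = univ := by decide
  have e7 : ({0} : Finset (Fin 2)) ≠ univ := by decide
  -- Game A : worth 1 exactly on {0}
  set A : Finset (Fin 2) → ℝ := fun S => if S = {0} then 1 else 0 with hA
  -- Game C : worth 1 exactly on univ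
  set C : Finset (Fin 2) → ℝ := fun S => if S = univ then 1 else 0 with hC
  have hA0 : A ∅ = 0 := by simp [hA, e1]
  have hC0 : C ∅ = 0 := by simp [hC, e2]
  have hB0 : (A + C) ∅ = 0 := by simp [hA0, hC0]
  -- φ univ A = 0 by joint null
  have h1 : φ A univ = 0 := by
    apply hnull A hA0 univ ⟨0, mem_univ 0⟩
    intro S hS
    have : S = ∅ := by simpa using hS
    subst this
    simp [hA, e1, e3]
  -- φ {1} A = φ univ A by strong joint symmetry
  have h2 : φ A {1} = φ A univ := by
    apply hsym A hA0 {1} univ ⟨1, mem_singleton_self 1⟩ ⟨0, mem_univ 0⟩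
    intro S hS
    have : S = ∅ := by simpa using hS
    subst this
    simp [hA, e4, e3]
  -- efficiency for A gives φ {0} A = 0
  have h3 : φ A {0} + φ A {1} + φ A univ = A univ := heff A hA0
  have hAuniv : A univ = 0 := by simp [hA, e3]
  have h4 : φ A {0} = 0 := by
    rw [hAuniv, h1] at h3
    rw [h2, h1] at h3
    linarith
  -- φ {1} (A+C) = 0 by joint null
  have h5 : φ (A + C) {1} = 0 := by
    apply hnull (A + C) hB0 {1} ⟨1, mem_singleton_self 1⟩
    intro S hS
    have hcomp : ({1} : Finset (Fin 2))ᶜ = {0} := by decide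
    rw [hcomp, subset_singleton_iff] at hS
    rcases hS with h | h <;> subst h <;> simp [hA, hC, e1, e2, e3, e4, e5, e6, e7]
  -- φ {0} (A+C) = φ univ (A+C) by strong joint symmetry
  have h6 : φ (A + C) {0} = φ (A + C) univ := by
    apply hsym (A + C) hB0 {0} univ ⟨0, mem_singleton_self 0⟩ ⟨0, mem_univ 0⟩
    intro S hS
    have : S = ∅ := by simpa using hS
    subst this
    simp [hA, hC, e3, e7]
  -- efficiency for A+C
  have h7 : φ (A + C) {0} + φ (A + C) {1} + φ (A + C) univ = (A + C) univ :=
    heff (A + C) hB0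
  have hBuniv : (A + C) univ = 1 := by simp [hA, hC, e3]
  -- linearity
  have hlin0 : φ (A + C) {0} = φ A {0} + φ C {0} := hadd A C hA0 hC0 {0}
  have hlin1 : φ (A + C) {1} = φ A {1} + φ C {1} := hadd A C hA0 hC0 {1}
  -- symmetry on C between {0} and {1}
  have h8 : φ C {0} = φ C {1} := by
    apply hsym C hC0 {0} {1} ⟨0, mem_singleton_self 0⟩ ⟨1, mem_singleton_self 1⟩
    intro S hS
    have : S = ∅ := by
      have hc : ({0} ∪ {1} : Finset (Fin 2))ᶜ = ∅ := by decide
      rw [hc] at hS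
      simpa using hS
    subst this
    simp [hC, e5, e7]
  have h9 : φ A {1} = 0 := by rw [h2, h1]
  -- combine
  have h10 : φ C {1} = 0 := by
    have := hlin1
    rw [h5, h9] at this
    linarith
  have h11 : φ (A + C) {0} = 0 := by
    rw [hlin0, h4, h8, h10]; ring
  rw [h11, h5, ← h6, h11, hBuniv] at h7
  norm_num at h7
end

section
/- Fix 1 ≤ k ≤ n and let (q_0,…,q_{n−1}) be the unique solution of the recursion q_0 = 1/(Σ_{i=1}^{k} C(n,i)), q_r = (Σ_{s=max(r−k,0)}^{r−1} C(r,s) q_s)/(Σ_{s=1}^{min(k,n−r)} C(n−r,s)) for 1 ≤ r ≤ n−1. Then Σ_{s=n−k}^{n−1} C(n,s)·q_s = 1. -/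
open Finset

/-- The joint Shapley coefficients `(q_0, …, q_{n-1})` satisfy the normalisation
`∑_{s=n-k}^{n-1} C(n,s) q_s = 1`. -/
theorem stmt19 (n k : ℕ) (hn : 1 ≤ n) (hk1 : 1 ≤ k) (hkn : k ≤ n)
    (q : ℕ → ℝ)
    (hq0 : q 0 = 1 / ∑ i ∈ Finset.Icc 1 k, (n.choose i : ℝ))
    (hqr : ∀ r, 1 ≤ r → r ≤ n - 1 →
      q r = (∑ s ∈ Finset.Ico (r - k) r, (r.choose s : ℝ) * q s) /
            (∑ s ∈ Finset.Icc 1 (min k (n - r)), ((n - r).choose s : ℝ))) :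
    ∑ s ∈ Finset.Ico (n - k) n, (n.choose s : ℝ) * q s = 1 := by
  set F : ℕ → ℕ → ℝ := fun s t => (((n - s).choose (t - s) : ℝ)) * ((n.choose s : ℝ) * q s)
    with hF
  set G : ℕ → ℕ → ℝ := fun s t => if s < t ∧ t ≤ s + k then F s t else 0 with hG
  -- positivity of the denominators
  have hA : ∀ r, r < n → (0 : ℝ) < ∑ s ∈ Finset.Icc 1 (min k (n - r)), ((n - r).choose s : ℝ) := by
    intro r hr
    apply Finset.sum_pos
    · intro s hs
      rw [Finset.mem_Icc] at hs
      have : s ≤ n - r := le_trans hs.2 (min_le_right _ _)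
      exact_mod_cast Nat.choose_pos this
    · exact ⟨1, by rw [Finset.mem_Icc]; omega⟩
  -- row sums
  have hrow : ∀ r, r < n →
      ∑ t ∈ Finset.range (n + 1), G r t
        = (n.choose r : ℝ) * q r * ∑ s ∈ Finset.Icc 1 (min k (n - r)), ((n - r).choose s : ℝ) := by
    intro r hr
    have h1 : ∑ t ∈ Finset.range (n + 1), G r t
        = ∑ t ∈ Finset.Icc (r + 1) (min (r + k) n), G r t := by
      refine (Finset.sum_subset ?_ ?_).symm
      · intro t ht; rw [Finset.mem_Icc] at ht; rw [Finset.mem_range]; omega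
      · intro t ht hnt
        rw [Finset.mem_range] at ht; rw [Finset.mem_Icc] at hnt
        rw [hG]; simp only; rw [if_neg]; omega
    have h2 : ∑ t ∈ Finset.Icc (r + 1) (min (r + k) n), G r t
        = ∑ t ∈ Finset.Icc (r + 1) (min (r + k) n), F r t := by
      apply Finset.sum_congr rfl
      intro t ht; rw [Finset.mem_Icc] at ht
      rw [hG]; simp only; rw [if_pos]; omega
    have hmin : min (r + k) n = r + min k (n - r) := by omega
    have h3 : Finset.Icc (r + 1) (min (r + k) n)
        = (Finset.Icc 1 (min k (n - r))).map (addLeftEmbedding r) := by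
      rw [Finset.map_add_left_Icc, hmin]
    rw [h1, h2, h3, Finset.sum_map]
    have h4 : ∀ s ∈ Finset.Icc 1 (min k (n - r)),
        F r (addLeftEmbedding r s) = ((n - r).choose s : ℝ) * ((n.choose r : ℝ) * q r) := by
      intro s hs
      have he : addLeftEmbedding r s = r + s := rfl
      rw [hF]
      simp only [he, Nat.add_sub_cancel_left]
    rw [Finset.sum_congr rfl h4, ← Finset.sum_mul]
    ring
  -- column sums
  have hcol : ∀ t, 1 ≤ t → t ≤ n →
      ∑ s ∈ Finset.range n, G s t = ∑ s ∈ Finset.Ico (t - k) t, F s t := by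
    intro t ht1 htn
    have h1 : ∑ s ∈ Finset.range n, G s t = ∑ s ∈ Finset.Ico (t - k) t, G s t := by
      refine (Finset.sum_subset ?_ ?_).symm
      · intro s hs; rw [Finset.mem_Ico] at hs; rw [Finset.mem_range]; omega
      · intro s hs hns
        rw [Finset.mem_range] at hs; rw [Finset.mem_Ico] at hns
        rw [hG]; simp only; rw [if_neg]; omega
    rw [h1]
    apply Finset.sum_congr rfl
    intro s hs; rw [Finset.mem_Ico] at hs
    rw [hG]; simp only; rw [if_pos]; omega
  -- for 1 ≤ r ≤ n-1 the row sum equals the column sum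
  have hrowcol : ∀ r, 1 ≤ r → r ≤ n - 1 →
      ∑ t ∈ Finset.range (n + 1), G r t = ∑ s ∈ Finset.range n, G s r := by
    intro r hr1 hr2
    have hrn : r < n := by omega
    rw [hrow r hrn, hcol r hr1 (by omega), hqr r hr1 hr2]
    rw [mul_assoc, div_mul_cancel₀ _ (ne_of_gt (hA r hrn))]
    rw [Finset.mul_sum]
    apply Finset.sum_congr rfl
    intro s hs
    rw [Finset.mem_Ico] at hs
    have hc : (n.choose r : ℝ) * (r.choose s : ℝ)
        = (n.choose s : ℝ) * ((n - s).choose (r - s) : ℝ) := by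
      have := Nat.choose_mul (k := r) (s := s) (n := n) (by omega)
      exact_mod_cast this
    rw [hF]; simp only
    rw [← mul_assoc, hc]
    ring
  -- row 0
  have hrow0 : ∑ t ∈ Finset.range (n + 1), G 0 t = 1 := by
    rw [hrow 0 (by omega)]
    have hmin0 : min k (n - 0) = k := by omega
    have hsub0 : n - 0 = n := by omega
    rw [hmin0, hsub0, hq0, Nat.choose_zero_right]
    have hpos : (0 : ℝ) < ∑ i ∈ Finset.Icc 1 k, (n.choose i : ℝ) := by
      have := hA 0 (by omega)
      rwa [hmin0, hsub0] at this
    field_simp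
    norm_num
  -- column 0 is zero
  have hcol0 : ∑ s ∈ Finset.range n, G s 0 = 0 := by
    apply Finset.sum_eq_zero
    intro s hs
    rw [hG]; simp only; rw [if_neg]; omega
  -- column n is the target sum
  have hcoln : ∑ s ∈ Finset.range n, G s n
      = ∑ s ∈ Finset.Ico (n - k) n, (n.choose s : ℝ) * q s := by
    rw [hcol n hn le_rfl]
    apply Finset.sum_congr rfl
    intro s hs
    rw [Finset.mem_Ico] at hs
    rw [hF]; simp only
    rw [Nat.choose_self]
    push_cast
    ring
  -- double counting
  have hswap : ∑ r ∈ Finset.range n, ∑ t ∈ Finset.range (n + 1), G r t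
      = ∑ t ∈ Finset.range (n + 1), ∑ s ∈ Finset.range n, G s t := Finset.sum_comm
  have hsplit : ∀ (m : ℕ) (f : ℕ → ℝ), 0 < m →
      ∑ r ∈ Finset.range m, f r = f 0 + ∑ r ∈ Finset.Ico 1 m, f r := by
    intro m f hm
    rw [Finset.range_eq_Ico, Finset.sum_eq_sum_Ico_succ_bot hm]
  rw [hsplit n (fun r => ∑ t ∈ Finset.range (n + 1), G r t) (by omega),
      hsplit (n + 1) (fun t => ∑ s ∈ Finset.range n, G s t) (by omega)] at hswap
  rw [hrow0, hcol0, Finset.sum_Ico_succ_top (by omega : 1 ≤ n)] at hswap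
  have hmid : ∑ r ∈ Finset.Ico 1 n, ∑ t ∈ Finset.range (n + 1), G r t
      = ∑ r ∈ Finset.Ico 1 n, ∑ s ∈ Finset.range n, G s r := by
    apply Finset.sum_congr rfl
    intro r hr
    rw [Finset.mem_Ico] at hr
    exact hrowcol r hr.1 (by omega)
  rw [hmid, hcoln] at hswap
  linarith
end
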